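/- arXiv:1012.0869 — 7 statements merged into one kernel-verified Lean document; each statement's English description precedes it below -/
import Mathlib

section
/- Let φ, φ' : k⟨t₁,…,t_m⟩ → M_n(k) be k-algebra homomorphisms with φ surjective. If for every element p of the free algebra the characteristic polynomials of φ(p) and φ'(p) coincide, then there exists an invertible matrix g ∈ GL_n(k) such that φ'(p) = g·φ(p)·g⁻¹ for all p ∈ k⟨t₁,…,t_m⟩. -/
open Matrix

namespace Stmt0Aux
open Polynomial

variable {k : Type*} [Field k] {m n : ℕ}
variable (φ φ' : FreeAlgebra k (Fin m) →ₐ[k] Matrix (Fin n) (Fin n) k)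

/-- The common kernel of `φ'(ker φ)`. -/
def W : Submodule k (Fin n → k) where
  carrier := {v | ∀ p, φ p = 0 → φ' p *ᵥ v = 0}
  add_mem' := by
    intro a b ha hb p hp
    rw [Matrix.mulVec_add, ha p hp, hb p hp, add_zero]
  zero_mem' := fun p _ => Matrix.mulVec_zero _
  smul_mem' := by
    intro c v hv p hp
    rw [Matrix.mulVec_smul, hv p hp, smul_zero]

lemma mem_W {v : Fin n → k} : v ∈ W φ φ' ↔ ∀ p, φ p = 0 → φ' p *ᵥ v = 0 := Iff.rfl

lemma eqOn_W {p q : FreeAlgebra k (Fin m)} (h : φ p = φ q) {v : Fin n → k}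
    (hv : v ∈ W φ φ') : φ' p *ᵥ v = φ' q *ᵥ v := by
  have h0 : φ (p - q) = 0 := by rw [map_sub, h, sub_self]
  have h1 := hv (p - q) h0
  rwa [map_sub, Matrix.sub_mulVec, sub_eq_zero] at h1

lemma W_invariant {v : Fin n → k} (hv : v ∈ W φ φ') (q : FreeAlgebra k (Fin m)) :
    φ' q *ᵥ v ∈ W φ φ' := by
  intro p hp
  rw [Matrix.mulVec_mulVec, ← _root_.map_mul]
  exact hv _ (by rw [_root_.map_mul, hp, zero_mul])

lemma charpoly_zero_eq : (0 : Matrix (Fin n) (Fin n) k).charpoly = X ^ n := by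
  have h : charmatrix (0 : Matrix (Fin n) (Fin n) k) = diagonal fun _ => (X : k[X]) := by
    ext i j
    rw [charmatrix_apply]
    simp [Matrix.diagonal_apply]
  rw [Matrix.charpoly, h, Matrix.det_diagonal]
  simp

lemma nilp (hchar : ∀ p : FreeAlgebra k (Fin m), (φ p).charpoly = (φ' p).charpoly)
    {p : FreeAlgebra k (Fin m)} (hp : φ p = 0) : (φ' p) ^ n = 0 := by
  have h1 : (φ' p).charpoly = X ^ n := by rw [← hchar, hp, charpoly_zero_eq]
  have h2 := (φ' p).aeval_self_charpoly
  rwa [h1, map_pow, aeval_X] at h2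

/-- `φ'(ker φ) s`, a submodule. -/
def U (s : Fin n → k) : Submodule k (Fin n → k) where
  carrier := {v | ∃ p, φ p = 0 ∧ φ' p *ᵥ s = v}
  zero_mem' := ⟨0, by simp, by simp⟩
  add_mem' := by
    rintro a b ⟨p, hp, rfl⟩ ⟨q, hq, rfl⟩
    exact ⟨p + q, by rw [map_add, hp, hq, add_zero],
      by rw [map_add, Matrix.add_mulVec]⟩
  smul_mem' := by
    rintro c v ⟨p, hp, rfl⟩
    exact ⟨c • p, by rw [_root_.map_smul, hp, smul_zero],
      by rw [_root_.map_smul, Matrix.smul_mulVec]⟩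

lemma W_ne_bot [NeZero n]
    (hchar : ∀ p : FreeAlgebra k (Fin m), (φ p).charpoly = (φ' p).charpoly) :
    W φ φ' ≠ ⊥ := by
  classical
  intro hW
  set D : Set ℕ := {d | ∃ S : Submodule k (Fin n → k),
    (∀ q, ∀ v ∈ S, φ' q *ᵥ v ∈ S) ∧ S ≠ ⊥ ∧ Module.finrank k S = d} with hD
  have htopne : (⊤ : Submodule k (Fin n → k)) ≠ ⊥ := by
    rw [Submodule.ne_bot_iff]
    refine ⟨fun _ => 1, Submodule.mem_top, fun h => ?_⟩
    have := congrFun h ⟨0, Nat.pos_of_ne_zero (NeZero.ne n)⟩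
    simp at this
  have hDne : D.Nonempty :=
    ⟨Module.finrank k (⊤ : Submodule k (Fin n → k)),
      ⊤, fun _ _ _ => Submodule.mem_top, htopne, rfl⟩
  obtain ⟨S, hSinv, hSne, hSrank⟩ := Nat.sInf_mem hDne
  obtain ⟨s, hsS, hs0⟩ := (Submodule.ne_bot_iff S).mp hSne
  have hUle : U φ φ' s ≤ S := by
    rintro v ⟨p, hp, rfl⟩
    exact hSinv p s hsS
  have hUinv : ∀ q, ∀ v ∈ U φ φ' s, φ' q *ᵥ v ∈ U φ φ' s := by
    rintro q v ⟨p, hp, rfl⟩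
    exact ⟨q * p, by rw [_root_.map_mul, hp, mul_zero],
      by rw [_root_.map_mul, Matrix.mulVec_mulVec]⟩
  have hsW : s ∉ W φ φ' := fun h => hs0 (by rwa [hW, Submodule.mem_bot] at h)
  rw [mem_W] at hsW
  push_neg at hsW
  obtain ⟨p₀, hp₀, hp₀ne⟩ := hsW
  have hUne : U φ φ' s ≠ ⊥ :=
    (Submodule.ne_bot_iff _).mpr ⟨φ' p₀ *ᵥ s, ⟨p₀, hp₀, rfl⟩, hp₀ne⟩
  have h1 : sInf D ≤ Module.finrank k (U φ φ' s) := Nat.sInf_le ⟨U φ φ' s, hUinv, hUne, rfl⟩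
  have hUS : U φ φ' s = S :=
    Submodule.eq_of_le_of_finrank_le hUle (by rw [hSrank]; exact h1)
  rw [← hUS] at hsS
  obtain ⟨p, hp, hps⟩ := hsS
  have hpow : ∀ j, (φ' p) ^ j *ᵥ s = s := by
    intro j
    induction j with
    | zero => rw [pow_zero, Matrix.one_mulVec]
    | succ j ih => rw [pow_succ, ← Matrix.mulVec_mulVec, hps, ih]
  have hn := hpow n
  rw [nilp φ φ' hchar hp, Matrix.zero_mulVec] at hn
  exact hs0 hn.symm

end Stmt0Aux

/-- If `φ, φ' : k⟨t₁,…,t_m⟩ → M_n(k)` are `k`-algebra homomorphisms with `φ`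
surjective, and `φ(p)` and `φ'(p)` have the same characteristic polynomial for every `p`,
then `φ'` is conjugate to `φ` by some `g ∈ GL_n(k)`. -/
theorem stmt_0 (k : Type*) [Field k] [IsAlgClosed k] (m n : ℕ) [NeZero m] [NeZero n]
    (φ φ' : FreeAlgebra k (Fin m) →ₐ[k] Matrix (Fin n) (Fin n) k)
    (hφ : Function.Surjective φ)
    (hchar : ∀ p : FreeAlgebra k (Fin m), (φ p).charpoly = (φ' p).charpoly) :
    ∃ g : GL (Fin n) k, ∀ p : FreeAlgebra k (Fin m),
      φ' p = (g : Matrix (Fin n) (Fin n) k) * φ p * (↑g⁻¹ : Matrix (Fin n) (Fin n) k) := by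
  classical
  obtain ⟨w, hwW, hw0⟩ := (Submodule.ne_bot_iff _).mp (Stmt0Aux.W_ne_bot φ φ' hchar)
  set σ : Matrix (Fin n) (Fin n) k → FreeAlgebra k (Fin m) := Function.surjInv hφ with hσdef
  have hσ : ∀ x, φ (σ x) = x := fun x => Function.surjInv_eq hφ x
  set a : Matrix (Fin n) (Fin n) k → Matrix (Fin n) (Fin n) k := fun x => φ' (σ x) with hadef
  have F0 : ∀ p, ∀ v ∈ Stmt0Aux.W φ φ', φ' p *ᵥ v = a (φ p) *ᵥ v := fun p v hv =>
    Stmt0Aux.eqOn_W φ φ' (hσ (φ p)).symm hv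
  have F1 : ∀ x, ∀ v ∈ Stmt0Aux.W φ φ', a x *ᵥ v ∈ Stmt0Aux.W φ φ' := fun x v hv =>
    Stmt0Aux.W_invariant φ φ' hv (σ x)
  have F2 : ∀ x y, ∀ v ∈ Stmt0Aux.W φ φ', a (x * y) *ᵥ v = a x *ᵥ (a y *ᵥ v) := by
    intro x y v hv
    have h : φ (σ (x * y)) = φ (σ x * σ y) := by rw [hσ, _root_.map_mul, hσ, hσ]
    rw [show a (x*y) *ᵥ v = φ' (σ x * σ y) *ᵥ v from Stmt0Aux.eqOn_W φ φ' h hv,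
      _root_.map_mul, ← Matrix.mulVec_mulVec]
  have F3 : ∀ v ∈ Stmt0Aux.W φ φ', a 1 *ᵥ v = v := by
    intro v hv
    have h : φ (σ 1) = φ 1 := by rw [hσ, _root_.map_one]
    rw [show a 1 *ᵥ v = φ' 1 *ᵥ v from Stmt0Aux.eqOn_W φ φ' h hv, _root_.map_one,
      Matrix.one_mulVec]
  have F00 : ∀ v ∈ Stmt0Aux.W φ φ', a 0 *ᵥ v = 0 := by
    intro v hv
    have h : φ (σ 0) = φ 0 := by rw [hσ, _root_.map_zero]
    rw [show a 0 *ᵥ v = φ' 0 *ᵥ v from Stmt0Aux.eqOn_W φ φ' h hv, _root_.map_zero,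
      Matrix.zero_mulVec]
  have mkL : ∀ v, v ∈ Stmt0Aux.W φ φ' →
      ∃ L : Matrix (Fin n) (Fin n) k →ₗ[k] (Fin n → k), ∀ x, L x = a x *ᵥ v := by
    intro v hv
    refine ⟨{ toFun := fun x => a x *ᵥ v, map_add' := ?_, map_smul' := ?_ }, fun _ => rfl⟩
    · intro x y
      have h : φ (σ (x + y)) = φ (σ x + σ y) := by rw [hσ, _root_.map_add, hσ, hσ]
      show a (x + y) *ᵥ v = a x *ᵥ v + a y *ᵥ v
      rw [show a (x + y) *ᵥ v = φ' (σ x + σ y) *ᵥ v from Stmt0Aux.eqOn_W φ φ' h hv,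
        _root_.map_add, Matrix.add_mulVec]
    · intro c x
      have h : φ (σ (c • x)) = φ (c • σ x) := by rw [hσ, _root_.map_smul, hσ]
      show a (c • x) *ᵥ v = (RingHom.id k) c • (a x *ᵥ v)
      rw [show a (c • x) *ᵥ v = φ' (c • σ x) *ᵥ v from Stmt0Aux.eqOn_W φ φ' h hv,
        _root_.map_smul, Matrix.smul_mulVec, RingHom.id_apply]
  obtain ⟨Lw, hLw⟩ := mkL w hwW
  have hone : (1 : Matrix (Fin n) (Fin n) k) = ∑ i, Matrix.single i i (1:k) := by
    ext r c
    rw [Matrix.sum_apply]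
    by_cases h : r = c
    · subst h
      rw [Matrix.one_apply_eq, Finset.sum_eq_single r
        (fun b _ hb => Matrix.single_apply_of_ne b b 1 r r (fun hh => hb hh.1))
        (fun hr => absurd (Finset.mem_univ r) hr)]
      exact (Matrix.single_apply_same r r 1).symm
    · rw [Matrix.one_apply_ne h, Finset.sum_eq_zero]
      intro b _
      exact Matrix.single_apply_of_ne b b 1 r c (fun hh => h (hh.1.symm.trans hh.2))
  have hw1 : w = ∑ i, a (Matrix.single i i (1:k)) *ᵥ w := by
    calc w = a 1 *ᵥ w := (F3 w hwW).symm
      _ = Lw 1 := (hLw 1).symm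
      _ = ∑ i, Lw (Matrix.single i i (1:k)) := by rw [hone, map_sum]
      _ = ∑ i, a (Matrix.single i i (1:k)) *ᵥ w := by simp only [hLw]
  have hex : ∃ i, a (Matrix.single i i (1:k)) *ᵥ w ≠ 0 := by
    by_contra h
    push_neg at h
    exact hw0 (by rw [hw1]; exact Finset.sum_eq_zero fun i _ => h i)
  obtain ⟨i, hi⟩ := hex
  set v : Fin n → Fin n → k := fun j => a (Matrix.single j i (1:k)) *ᵥ w with hvdef
  have hvW : ∀ j, v j ∈ Stmt0Aux.W φ φ' := fun j => F1 _ w hwW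
  have hxE : ∀ (x : Matrix (Fin n) (Fin n) k) (j : Fin n),
      x * Matrix.single j i 1 = ∑ l, x l j • Matrix.single l i (1:k) := by
    intro x j
    ext r c
    by_cases hc : c = i
    · subst hc
      simp [Matrix.sum_apply, Matrix.single, Matrix.mul_apply]
    · have hc' : ¬ i = c := fun hh => hc hh.symm
      simp [Matrix.sum_apply, Matrix.single, Matrix.mul_apply, hc']
  have G1 : ∀ (x : Matrix (Fin n) (Fin n) k) (j : Fin n),
      a x *ᵥ v j = ∑ l, x l j • v l := by
    intro x j
    calc a x *ᵥ v j = a (x * Matrix.single j i 1) *ᵥ w := (F2 x _ w hwW).symm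
      _ = Lw (x * Matrix.single j i 1) := (hLw _).symm
      _ = ∑ l, x l j • Lw (Matrix.single l i 1) := by
          rw [hxE x j, map_sum]
          simp only [_root_.map_smul]
      _ = ∑ l, x l j • v l := by simp only [hLw, hvdef]
  set g : Matrix (Fin n) (Fin n) k := Matrix.of (fun r j => v j r) with hgdef
  have hgmul : ∀ c : Fin n → k, g *ᵥ c = ∑ j, c j • v j := by
    intro c
    ext r
    simp [hgdef, Matrix.mulVec, dotProduct, Finset.sum_apply, mul_comm]
  have hginj : ∀ c : Fin n → k, g *ᵥ c = 0 → c = 0 := by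
    intro c hc
    funext j₀
    have h1 : a (Matrix.single i j₀ 1) *ᵥ (g *ᵥ c) = 0 := by
      rw [hc, Matrix.mulVec_zero]
    rw [hgmul] at h1
    have h2 : a (Matrix.single i j₀ 1) *ᵥ (∑ j, c j • v j)
        = ∑ j, c j • (a (Matrix.single i j₀ 1) *ᵥ v j) := by
      rw [← Matrix.mulVecLin_apply, map_sum]
      simp [Matrix.mulVecLin_apply]
    rw [h2] at h1
    have h3 : ∀ j, a (Matrix.single i j₀ (1:k)) *ᵥ v j
        = if j = j₀ then a (Matrix.single i i (1:k)) *ᵥ w else 0 := by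
      intro j
      have hvj : v j = a (Matrix.single j i (1:k)) *ᵥ w := rfl
      rw [hvj, ← F2 _ _ w hwW]
      by_cases h : j = j₀
      · subst h
        rw [if_pos rfl, Matrix.single_mul_single_same, one_mul]
      · rw [if_neg h, Matrix.single_mul_single_of_ne (1:k) i j₀ j
          (fun hh : j₀ = j => h hh.symm) (1:k), F00 w hwW]
    simp only [h3, smul_ite, smul_zero] at h1
    rw [Finset.sum_ite_eq' Finset.univ j₀
      (fun j => c j • (a (Matrix.single i i (1:k)) *ᵥ w))] at h1
    simp only [Finset.mem_univ, if_true] at h1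
    have := (smul_eq_zero.mp h1).resolve_right hi
    simpa using this
  have hdet : g.det ≠ 0 := by
    intro h
    obtain ⟨c, hc0, hc⟩ := (Matrix.exists_mulVec_eq_zero_iff).2 h
    exact hc0 (hginj c hc)
  have hunit : IsUnit g := (Matrix.isUnit_iff_isUnit_det g).mpr (isUnit_iff_ne_zero.mpr hdet)
  refine ⟨hunit.unit, fun p => ?_⟩
  have hG : (hunit.unit : Matrix (Fin n) (Fin n) k) = g := hunit.unit_spec
  have hcomm : φ' p * g = g * φ p := by
    ext r j
    have h1 : φ' p *ᵥ v j = ∑ l, (φ p) l j • v l := by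
      rw [F0 p (v j) (hvW j), G1]
    calc (φ' p * g) r j = (φ' p *ᵥ v j) r := by
          simp [hgdef, Matrix.mul_apply, Matrix.mulVec, dotProduct]
      _ = (∑ l, (φ p) l j • v l) r := by rw [h1]
      _ = (g * φ p) r j := by
          simp [hgdef, Matrix.mul_apply, Finset.sum_apply, mul_comm]
  have hcomm' : φ' p * (hunit.unit : Matrix (Fin n) (Fin n) k)
      = (hunit.unit : Matrix (Fin n) (Fin n) k) * φ p := by rw [hG]; exact hcomm
  calc φ' p = φ' p * ↑hunit.unit * ↑hunit.unit⁻¹ := (Units.mul_inv_cancel_right _ _).symm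
    _ = ↑hunit.unit * φ p * ↑hunit.unit⁻¹ := by rw [hcomm']
end

section
/- Let x = (x₁,…,x_m) be a generating m-tuple in M_n(k). Then for every m-tuple y = (y₁,…,y_m) in M_n(k), the following are equivalent: (i) for every p ∈ k⟨t₁,…,t_m⟩ the characteristic polynomials of ev_y(p) and ev_x(p) coincide; (ii) there exists an invertible matrix g ∈ GL_n(k) with y_i = g·x_i·g⁻¹ for all i = 1,…,m. In other words, the set of tuples on which all invariant characteristic-polynomial functions agree with their values at x is exactly the simultaneous-conjugation orbit of x. -/
open Matrix Polynomial


lemma my_charpoly_zero {k : Type*} [Field k] {n : ℕ} :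
    (0 : Matrix (Fin n) (Fin n) k).charpoly = X ^ n := by
  rw [Matrix.charpoly]
  have h : charmatrix (0 : Matrix (Fin n) (Fin n) k)
      = diagonal (fun _ : Fin n => (X : k[X])) := by simp [charmatrix]
  rw [h, det_diagonal]
  simp

lemma ker_le_ker {k : Type*} [Field k] {m n : ℕ} [NeZero n]
    (f g : FreeAlgebra k (Fin m) →ₐ[k] Matrix (Fin n) (Fin n) k)
    (hf : Function.Surjective f)
    (H : ∀ p, (g p).charpoly = (f p).charpoly) :
    ∀ p, f p = 0 → g p = 0 := by
  haveI : Nonempty (Fin n) := ⟨⟨0, Nat.pos_of_ne_zero (NeZero.ne n)⟩⟩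
  haveI : Module.Finite k (Matrix (Fin n) (Fin n) k) := Module.Finite.matrix
  classical
  set S : Submodule k (Matrix (Fin n) (Fin n) k) :=
    Submodule.map g.toLinearMap (LinearMap.ker f.toLinearMap) with hS
  haveI : FiniteDimensional k S := FiniteDimensional.finiteDimensional_submodule S
  haveI : FiniteDimensional k (Matrix (Fin n) (Fin n) k ⧸ S) := FiniteDimensional.finiteDimensional_quotient S
  have hmemS : ∀ a, a ∈ S ↔ ∃ r, f r = 0 ∧ g r = a := by
    intro a
    simp only [hS, Submodule.mem_map, LinearMap.mem_ker, AlgHom.toLinearMap_apply]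
  have hSchar : ∀ a ∈ S, a.charpoly = X ^ n := by
    intro a ha
    obtain ⟨r, hr0, rfl⟩ := (hmemS a).1 ha
    rw [H r, hr0, my_charpoly_zero]
  -- S is stable under multiplication by elements of the range of g
  have hSmul_l : ∀ (q : FreeAlgebra k (Fin m)), ∀ a ∈ S, g q * a ∈ S := by
    intro q a ha
    obtain ⟨r, hr0, rfl⟩ := (hmemS a).1 ha
    refine (hmemS _).2 ⟨q * r, ?_, by rw [_root_.map_mul]⟩
    rw [_root_.map_mul, hr0, mul_zero]
  have hSmul_r : ∀ (q : FreeAlgebra k (Fin m)), ∀ a ∈ S, a * g q ∈ S := by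
    intro q a ha
    obtain ⟨r, hr0, rfl⟩ := (hmemS a).1 ha
    refine (hmemS _).2 ⟨r * q, ?_, by rw [_root_.map_mul]⟩
    rw [_root_.map_mul, hr0, zero_mul]
  -- the two-sided ideal of M_n
  set I : TwoSidedIdeal (Matrix (Fin n) (Fin n) k) :=
    TwoSidedIdeal.mk' {a | ∃ p, f p = a ∧ g p ∈ S}
      ⟨0, _root_.map_zero f, by rw [_root_.map_zero]; exact S.zero_mem⟩
      (by rintro _ _ ⟨p, rfl, hp⟩ ⟨q, rfl, hq⟩
          exact ⟨p + q, _root_.map_add f p q, by rw [_root_.map_add]; exact S.add_mem hp hq⟩)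
      (by rintro _ ⟨p, rfl, hp⟩
          exact ⟨-p, _root_.map_neg f p, by rw [_root_.map_neg]; exact S.neg_mem hp⟩)
      (by rintro xx _ ⟨p, rfl, hp⟩
          obtain ⟨q, rfl⟩ := hf xx
          exact ⟨q * p, _root_.map_mul f q p, by rw [_root_.map_mul]; exact hSmul_l q _ hp⟩)
      (by rintro _ yy ⟨p, rfl, hp⟩
          obtain ⟨q, rfl⟩ := hf yy
          exact ⟨p * q, _root_.map_mul f p q, by rw [_root_.map_mul]; exact hSmul_r q _ hp⟩)
    with hI
  have hone : (1 : Matrix (Fin n) (Fin n) k) ∉ I := by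
    intro hmem
    rw [hI, TwoSidedIdeal.mem_mk'] at hmem
    obtain ⟨p, hp1, hpS⟩ := hmem
    have e1 : (1 : Matrix (Fin n) (Fin n) k).charpoly = X ^ n := by
      rw [← hp1, ← H p]; exact hSchar _ hpS
    have := Matrix.aeval_self_charpoly (1 : Matrix (Fin n) (Fin n) k)
    rw [e1] at this
    simp only [_root_.map_pow, aeval_X, one_pow] at this
    exact one_ne_zero this
  have hIbot : I = ⊥ :=
    (IsSimpleRing.simple.eq_bot_or_eq_top I).resolve_right
      (fun h => hone (h ▸ TwoSidedIdeal.mem_top _))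
  have key : ∀ p, g p ∈ S → f p = 0 := by
    intro p hp
    have : f p ∈ I := by rw [hI, TwoSidedIdeal.mem_mk']; exact ⟨p, rfl, hp⟩
    rwa [hIbot, TwoSidedIdeal.mem_bot] at this
  -- dimension count forces S = ⊥
  set L : FreeAlgebra k (Fin m) →ₗ[k] (Matrix (Fin n) (Fin n) k ⧸ S) :=
    S.mkQ.comp g.toLinearMap with hL
  have hkerL : LinearMap.ker L = LinearMap.ker f.toLinearMap := by
    ext p
    simp only [hL, LinearMap.mem_ker, LinearMap.comp_apply, AlgHom.toLinearMap_apply,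
      Submodule.mkQ_apply, Submodule.Quotient.mk_eq_zero]
    constructor
    · exact key p
    · intro hp; exact (hmemS _).2 ⟨p, hp, rfl⟩
  have hfsurj : LinearMap.range f.toLinearMap = ⊤ := by
    rw [LinearMap.range_eq_top]; exact hf
  have hrank : Module.finrank k (Matrix (Fin n) (Fin n) k)
      ≤ Module.finrank k (Matrix (Fin n) (Fin n) k ⧸ S) := by
    calc Module.finrank k (Matrix (Fin n) (Fin n) k)
        = Module.finrank k (⊤ : Submodule k (Matrix (Fin n) (Fin n) k)) :=
          Submodule.topEquiv.finrank_eq.symm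
      _ = Module.finrank k (LinearMap.range f.toLinearMap) := by rw [hfsurj]
      _ = Module.finrank k (FreeAlgebra k (Fin m) ⧸ LinearMap.ker f.toLinearMap) :=
          (LinearMap.quotKerEquivRange f.toLinearMap).finrank_eq.symm
      _ = Module.finrank k (FreeAlgebra k (Fin m) ⧸ LinearMap.ker L) := by rw [hkerL]
      _ = Module.finrank k (LinearMap.range L) :=
          (LinearMap.quotKerEquivRange L).finrank_eq
      _ ≤ Module.finrank k (Matrix (Fin n) (Fin n) k ⧸ S) :=
          (LinearMap.range L).finrank_le
  have hq := S.finrank_quotient_add_finrank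
  have h0 : Module.finrank k S = 0 := by
    have := Submodule.finrank_le S
    omega
  have hSbot : S = ⊥ := Submodule.finrank_eq_zero.mp h0
  intro p hp
  have : g p ∈ S := (hmemS _).2 ⟨p, hp, rfl⟩
  rwa [hSbot, Submodule.mem_bot] at this


lemma mul_stdCol {k : Type*} [Field k] {n : ℕ} [NeZero n] (a : Matrix (Fin n) (Fin n) k)
    (j : Fin n) :
    a * Matrix.single j (0 : Fin n) 1 = ∑ l, a l j • Matrix.single l (0 : Fin n) 1 := by
  classical
  ext r s
  rw [Matrix.sum_apply]
  by_cases hs : s = 0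
  · subst hs
    rw [Matrix.mul_single_apply_same]
    rw [Finset.sum_eq_single r]
    · simp
    · intro b _ hb
      rw [Matrix.smul_apply, Matrix.single_apply_of_row_ne hb, smul_zero]
    · simp
  · rw [Matrix.mul_single_apply_of_ne (a := r) (b := s) (hbj := hs)]
    symm
    apply Finset.sum_eq_zero
    intro b _
    rw [Matrix.smul_apply, Matrix.single_apply_of_col_ne b r (Ne.symm hs), smul_zero]

lemma mulVec_apply' {k : Type*} [Field k] {n : ℕ} (M : Matrix (Fin n) (Fin n) k)
    (x : Fin n → k) (c : Fin n) : (M *ᵥ x) c = ∑ l, M c l * x l := rfl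

lemma exists_unit {k : Type*} [Field k] {m n : ℕ} [NeZero n]
    (x y : Fin m → Matrix (Fin n) (Fin n) k)
    (hf : Function.Surjective (FreeAlgebra.lift k x))
    (H : ∀ p : FreeAlgebra k (Fin m),
      ((FreeAlgebra.lift k y) p).charpoly = ((FreeAlgebra.lift k x) p).charpoly) :
    ∃ u : (Matrix (Fin n) (Fin n) k)ˣ, ∀ i,
      y i = (u : Matrix (Fin n) (Fin n) k) * x i * (↑u⁻¹ : Matrix (Fin n) (Fin n) k) := by
  classical
  set f : FreeAlgebra k (Fin m) →ₐ[k] Matrix (Fin n) (Fin n) k := FreeAlgebra.lift k x with hfdef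
  set g : FreeAlgebra k (Fin m) →ₐ[k] Matrix (Fin n) (Fin n) k := FreeAlgebra.lift k y with hgdef
  have hker := ker_le_ker f g hf H
  have sub0 : ∀ p q, f p = f q → g p = g q := by
    intro p q h
    have := hker (p - q) (by rw [map_sub, h, sub_self])
    rw [map_sub, sub_eq_zero] at this
    exact this
  choose Q hQ using fun j : Fin n => hf (Matrix.single j (0 : Fin n) (1 : k))
  choose R hR using fun i : Fin n => hf (Matrix.single (0 : Fin n) i (1 : k))
  set F : Fin n → Matrix (Fin n) (Fin n) k := fun j => g (Q j) with hF
  set G : Fin n → Matrix (Fin n) (Fin n) k := fun i => g (R i) with hG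
  have hGF : ∀ i j, G i * F j = if i = j then F 0 else 0 := by
    intro i j
    by_cases h : i = j
    · subst h
      rw [if_pos rfl, hG, hF, ← _root_.map_mul]
      apply sub0
      rw [_root_.map_mul, hR, hQ, hQ, Matrix.single_mul_single_same, one_mul]
    · rw [if_neg h, hG, hF, ← _root_.map_mul, ← _root_.map_zero g]
      apply sub0
      rw [_root_.map_mul, _root_.map_zero, hR, hQ, Matrix.single_mul_single_of_ne (h := h)]
  have hF0idem : F 0 * F 0 = F 0 := by
    rw [hF, ← _root_.map_mul]
    apply sub0
    rw [_root_.map_mul, hQ, Matrix.single_mul_single_same, one_mul]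
  have hF0ne : F 0 ≠ 0 := by
    intro h0
    have h1 : (Matrix.single (0 : Fin n) (0 : Fin n) (1 : k)).charpoly = X ^ n := by
      rw [← hQ 0, ← H (Q 0)]
      show (F 0).charpoly = _
      rw [h0, my_charpoly_zero]
    have h2 := Matrix.aeval_self_charpoly (Matrix.single (0 : Fin n) (0 : Fin n) (1 : k))
    rw [h1] at h2
    simp only [map_pow, aeval_X] at h2
    have hidem : IsIdempotentElem (Matrix.single (0 : Fin n) (0 : Fin n) (1 : k)) := by
      show _ * _ = _
      rw [Matrix.single_mul_single_same, one_mul]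
    obtain ⟨n', rfl⟩ := Nat.exists_eq_succ_of_ne_zero (NeZero.ne n)
    rw [hidem.pow_succ_eq n'] at h2
    have := congrFun (congrFun h2 0) 0
    rw [Matrix.single_apply_same] at this
    exact one_ne_zero (this.trans rfl)
  obtain ⟨w, hw⟩ : ∃ w, F 0 *ᵥ w ≠ 0 := by
    by_contra hcon
    push_neg at hcon
    apply hF0ne
    ext r s
    have := congrFun (hcon (Pi.single s 1)) r
    rw [mulVec_single] at this
    simpa using this
  set v : Fin n → k := F 0 *ᵥ w with hv
  have hFv : F 0 *ᵥ v = v := by rw [hv, mulVec_mulVec, hF0idem]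
  obtain ⟨c, hc⟩ := Function.ne_iff.mp hw
  rw [Pi.zero_apply] at hc
  set u : Matrix (Fin n) (Fin n) k := Matrix.of (fun r j => (F j *ᵥ v) r) with hu
  set u' : Matrix (Fin n) (Fin n) k := Matrix.of (fun i l => (v c)⁻¹ * G i c l) with hu'
  have hGFv : ∀ i j, G i *ᵥ (F j *ᵥ v) = if i = j then v else 0 := by
    intro i j
    rw [mulVec_mulVec, hGF]
    by_cases h : i = j
    · rw [if_pos h, if_pos h, hFv]
    · rw [if_neg h, if_neg h, zero_mulVec]
  have hinv : u' * u = 1 := by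
    ext i j
    rw [Matrix.mul_apply]
    have step : ∀ l, u' i l * u l j = (v c)⁻¹ * (G i c l * (F j *ᵥ v) l) := by
      intro l
      rw [hu, hu', Matrix.of_apply, Matrix.of_apply, mul_assoc]
    rw [Finset.sum_congr rfl (fun l _ => step l), ← Finset.mul_sum,
      ← mulVec_apply' (G i) (F j *ᵥ v) c, hGFv]
    by_cases h : i = j
    · subst h
      rw [if_pos rfl, inv_mul_cancel₀ hc, Matrix.one_apply_eq]
    · rw [if_neg h, Pi.zero_apply, mul_zero, Matrix.one_apply_ne h]
  have hfι : ∀ i : Fin m, f (FreeAlgebra.ι k i) = x i := fun i => by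
    rw [hfdef]; exact FreeAlgebra.lift_ι_apply x i
  have hgι : ∀ i : Fin m, g (FreeAlgebra.ι k i) = y i := fun i => by
    rw [hgdef]; exact FreeAlgebra.lift_ι_apply y i
  have hyF : ∀ (i : Fin m) (j : Fin n), y i * F j = ∑ l, x i l j • F l := by
    intro i j
    have hsum : ∑ l, x i l j • F l = g (∑ l, x i l j • Q l) := by
      rw [map_sum]
      refine Finset.sum_congr rfl fun l _ => ?_
      rw [_root_.map_smul, hF]
    rw [← hgι i, hsum, hF]
    show g _ * g _ = _
    rw [← _root_.map_mul]
    apply sub0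
    rw [_root_.map_mul, hfι i, hQ j, map_sum]
    simp only [_root_.map_smul, hQ]
    rw [mul_stdCol]
  have hyu : ∀ i, y i * u = u * x i := by
    intro i
    ext r j
    rw [Matrix.mul_apply, Matrix.mul_apply]
    have lhs : ∑ s, y i r s * u s j = ((y i * F j) *ᵥ v) r := by
      rw [← mulVec_mulVec, mulVec_apply']
      refine Finset.sum_congr rfl fun s _ => ?_
      rw [hu, Matrix.of_apply]
    rw [lhs, hyF]
    rw [mulVec_apply']
    have e1 : ∀ s, (∑ l, x i l j • F l) r s * v s = ∑ l, x i l j * (F l r s * v s) := by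
      intro s
      rw [Matrix.sum_apply, Finset.sum_mul]
      refine Finset.sum_congr rfl fun l _ => ?_
      rw [Matrix.smul_apply, smul_eq_mul, mul_assoc]
    rw [Finset.sum_congr rfl fun s _ => e1 s, Finset.sum_comm]
    refine Finset.sum_congr rfl fun l _ => ?_
    rw [← Finset.mul_sum, hu, Matrix.of_apply, mulVec_apply', mul_comm]
  have huu' : u * u' = 1 := mul_eq_one_comm.mp hinv
  refine ⟨⟨u, u', huu', hinv⟩, fun i => ?_⟩
  show y i = u * x i * u'
  rw [← hyu i, mul_assoc, huu', mul_one]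

lemma charpoly_units_conj {k : Type*} [Field k] {n : ℕ} [NeZero n] (u : (Matrix (Fin n) (Fin n) k)ˣ) (a : Matrix (Fin n) (Fin n) k) :
    ((u : Matrix (Fin n) (Fin n) k) * a * (↑u⁻¹ : Matrix (Fin n) (Fin n) k)).charpoly
      = a.charpoly := by
  set Cm : Matrix (Fin n) (Fin n) k →+* Matrix (Fin n) (Fin n) k[X] :=
    (C : k →+* k[X]).mapMatrix with hCm
  have hmul : Cm ↑u * Cm ↑u⁻¹ = 1 := by
    rw [← _root_.map_mul, Units.mul_inv, _root_.map_one]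
  have h1 : charmatrix ((u : Matrix (Fin n) (Fin n) k) * a * (↑u⁻¹ : Matrix (Fin n) (Fin n) k))
      = Cm ↑u * charmatrix a * Cm ↑u⁻¹ := by
    rw [charmatrix, charmatrix, mul_sub, sub_mul]
    congr 1
    · rw [mul_assoc, (Matrix.scalar_commute (X : k[X]) (fun r => Commute.all _ _) _).eq,
        ← mul_assoc, hmul, one_mul]
    · rw [hCm]; simp [RingHom.mapMatrix_apply, Matrix.map_mul]
  rw [Matrix.charpoly, Matrix.charpoly, h1, det_mul, det_mul]
  have h2 : (Cm ↑u).det * (Cm ↑u⁻¹).det = 1 := by rw [← det_mul, hmul, det_one]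
  calc (Cm ↑u).det * (charmatrix a).det * (Cm ↑u⁻¹).det
      = (charmatrix a).det * ((Cm ↑u).det * (Cm ↑u⁻¹).det) := by ring
    _ = (charmatrix a).det := by rw [h2, mul_one]


noncomputable def conjAlgHom {k : Type*} [Field k] {n : ℕ} (u : (Matrix (Fin n) (Fin n) k)ˣ) :
    Matrix (Fin n) (Fin n) k →ₐ[k] Matrix (Fin n) (Fin n) k where
  toFun a := ↑u * a * ↑u⁻¹
  map_one' := by show (↑u : Matrix (Fin n) (Fin n) k) * 1 * (↑u⁻¹ : Matrix (Fin n) (Fin n) k) = 1; rw [mul_one, Units.mul_inv]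
  map_mul' a b := by
    show (↑u : Matrix (Fin n) (Fin n) k) * (a * b) * (↑u⁻¹ : Matrix (Fin n) (Fin n) k) = ((↑u : Matrix (Fin n) (Fin n) k) * a * (↑u⁻¹ : Matrix (Fin n) (Fin n) k)) * ((↑u : Matrix (Fin n) (Fin n) k) * b * (↑u⁻¹ : Matrix (Fin n) (Fin n) k))
    have h : (↑u⁻¹ : Matrix (Fin n) (Fin n) k) * (↑u : Matrix (Fin n) (Fin n) k) = 1 :=
      u.inv_mul
    calc (↑u : Matrix (Fin n) (Fin n) k) * (a * b) * (↑u⁻¹ : Matrix (Fin n) (Fin n) k)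
        = (↑u : Matrix (Fin n) (Fin n) k) * a * (((↑u⁻¹ : Matrix (Fin n) (Fin n) k) * (↑u : Matrix (Fin n) (Fin n) k)) * b * (↑u⁻¹ : Matrix (Fin n) (Fin n) k)) := by
          rw [h]; noncomm_ring
      _ = ((↑u : Matrix (Fin n) (Fin n) k) * a * (↑u⁻¹ : Matrix (Fin n) (Fin n) k)) * ((↑u : Matrix (Fin n) (Fin n) k) * b * (↑u⁻¹ : Matrix (Fin n) (Fin n) k)) := by noncomm_ring
  map_zero' := by show (↑u : Matrix (Fin n) (Fin n) k) * 0 * (↑u⁻¹ : Matrix (Fin n) (Fin n) k) = 0; simp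
  map_add' a b := by
    show (↑u : Matrix (Fin n) (Fin n) k) * (a + b) * (↑u⁻¹ : Matrix (Fin n) (Fin n) k) = (↑u : Matrix (Fin n) (Fin n) k) * a * (↑u⁻¹ : Matrix (Fin n) (Fin n) k) + (↑u : Matrix (Fin n) (Fin n) k) * b * (↑u⁻¹ : Matrix (Fin n) (Fin n) k)
    noncomm_ring
  commutes' c := by
    show (↑u : Matrix (Fin n) (Fin n) k) * algebraMap k _ c * (↑u⁻¹ : Matrix (Fin n) (Fin n) k) = algebraMap k _ c
    rw [Algebra.algebraMap_eq_smul_one, mul_smul_comm, mul_one, smul_mul_assoc, Units.mul_inv]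


lemma lift_eq_conj {k : Type*} [Field k] {n m : ℕ} (u : (Matrix (Fin n) (Fin n) k)ˣ)
    (x y : Fin m → Matrix (Fin n) (Fin n) k)
    (h : ∀ i, y i = (u : Matrix (Fin n) (Fin n) k) * x i * (↑u⁻¹ : Matrix (Fin n) (Fin n) k)) :
    FreeAlgebra.lift k y = (conjAlgHom u).comp (FreeAlgebra.lift k x) := by
  apply FreeAlgebra.hom_ext
  ext i
  simp [conjAlgHom, h i]

/-- For a generating `m`-tuple `x` in `M_n(k)`, a tuple `y` satisfies
`charpoly (ev_y p) = charpoly (ev_x p)` for all `p` in the free algebra if and only if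
`y` lies in the simultaneous-conjugation orbit of `x`. -/
theorem stmt_1 (k : Type*) [Field k] [IsAlgClosed k] (m n : ℕ) [NeZero m] [NeZero n]
    (x : Fin m → Matrix (Fin n) (Fin n) k)
    (hx : Algebra.adjoin k (Set.range x) = ⊤)
    (y : Fin m → Matrix (Fin n) (Fin n) k) :
    (∀ p : FreeAlgebra k (Fin m),
        ((FreeAlgebra.lift k y) p).charpoly = ((FreeAlgebra.lift k x) p).charpoly) ↔
    ∃ g : GL (Fin n) k, ∀ i : Fin m,
        y i = (g : Matrix (Fin n) (Fin n) k) * x i * (↑g⁻¹ : Matrix (Fin n) (Fin n) k) := by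
  have hsurj : Function.Surjective (FreeAlgebra.lift k x) := by
    rw [← AlgHom.range_eq_top]
    rw [← Algebra.adjoin_range_eq_range_freeAlgebra_lift]
    exact hx
  constructor
  · intro H
    exact exists_unit x y hsurj H
  · rintro ⟨u, hu⟩ p
    have h1 : FreeAlgebra.lift k y = (conjAlgHom u).comp (FreeAlgebra.lift k x) :=
      lift_eq_conj u x y hu
    have h2 : (FreeAlgebra.lift k y) p
        = (u : Matrix (Fin n) (Fin n) k) * (FreeAlgebra.lift k x) p
          * (↑u⁻¹ : Matrix (Fin n) (Fin n) k) := by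
      rw [h1]; rfl
    rw [h2, _root_.charpoly_units_conj]
end

section
/- Let x = (x₁,…,x_m) be a generating m-tuple in M_n(k). Then the simultaneous-conjugation orbit {(g·x₁·g⁻¹,…,g·x_m·g⁻¹) : g ∈ GL_n(k)}, regarded as a subset of k^{mn²} via matrix entries, is Zariski closed; that is, there exists an ideal I of the polynomial ring over k in mn² variables whose zero locus is exactly this orbit. -/
open Matrix

private lemma conj_of_hom {k : Type*} [Field k] {n : ℕ} [NeZero n]
    (φ : Matrix (Fin n) (Fin n) k → Matrix (Fin n) (Fin n) k)
    (h1 : φ 1 = 1) (hmul : ∀ A B, φ (A * B) = φ A * φ B)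
    (hadd : ∀ A B, φ (A + B) = φ A + φ B)
    (hsmul : ∀ (c : k) A, φ (c • A) = c • φ A) :
    ∃ g : (Matrix (Fin n) (Fin n) k)ˣ, ∀ A,
      φ A = (↑g : Matrix (Fin n) (Fin n) k) * A * (↑g⁻¹ : Matrix (Fin n) (Fin n) k) := by
  classical
  let E : Fin n → Fin n → Matrix (Fin n) (Fin n) k := fun i j => Matrix.single i j 1
  have hφ0 : φ 0 = 0 := by simpa using hsmul 0 0
  have hsum : ∀ {ι : Type} (s : Finset ι) (f : ι → Matrix (Fin n) (Fin n) k),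
      φ (∑ i ∈ s, f i) = ∑ i ∈ s, φ (f i) := by
    intro ι s f
    exact map_sum (AddMonoidHom.mk' φ hadd) f s
  have hone : ∑ i, E i i = (1 : Matrix (Fin n) (Fin n) k) := by
    ext a c
    rw [Matrix.sum_apply]
    by_cases h : a = c
    · subst h
      rw [Matrix.one_apply_eq]
      rw [Finset.sum_eq_single a (fun x _ hx => by
        simp [E, Matrix.single, hx]) (by simp)]
      simp [E, Matrix.single]
    · rw [Matrix.one_apply_ne h]
      refine Finset.sum_eq_zero fun x _ => ?_
      simp only [E, Matrix.single, Matrix.of_apply]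
      rw [if_neg]
      rintro ⟨rfl, rfl⟩; exact h rfl
  have hEmul : ∀ i j i' j', E i j * E i' j' = if j = i' then E i j' else 0 := by
    intro i j i' j'
    by_cases h : j = i'
    · subst h
      simp [E]
    · rw [if_neg h]
      exact Matrix.single_mul_single_of_ne (c := (1:k)) i j i' h 1
  have hE00 : φ (E 0 0) ≠ 0 := by
    intro h0
    have : (1 : Matrix (Fin n) (Fin n) k) = 0 := by
      calc (1 : Matrix (Fin n) (Fin n) k) = φ 1 := h1.symm
        _ = φ (∑ i, E i i) := by rw [hone]
        _ = ∑ i, φ (E i i) := hsum _ _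
        _ = 0 := by
            refine Finset.sum_eq_zero fun i _ => ?_
            have hi : E i i = E i 0 * E 0 0 * E 0 i := by simp [hEmul]
            rw [hi, hmul, hmul, h0, mul_zero, zero_mul]
    exact one_ne_zero this
  obtain ⟨a, b, hab⟩ : ∃ a b, φ (E 0 0) a b ≠ 0 := by
    by_contra hc
    push_neg at hc
    exact hE00 (Matrix.ext fun a b => hc a b)
  set C : Matrix (Fin n) (Fin n) k := φ (E 0 0) * E b 0 with hC
  have hCcol : ∀ a', C a' 0 = φ (E 0 0) a' b := by
    intro a'
    rw [hC]
    simp [E]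
  have hidem : φ (E 0 0) * C = C := by
    rw [hC, ← mul_assoc, ← hmul]
    have h00 : E (0 : Fin n) 0 * E 0 0 = E 0 0 := by simp [hEmul]
    rw [h00]
  set G : Matrix (Fin n) (Fin n) k := ∑ j, φ (E j 0) * C * E 0 j with hG
  have key : ∀ i j, G * E i j = φ (E i j) * G := by
    intro i j
    rw [hG, Finset.sum_mul, Finset.mul_sum]
    have lhs : ∀ c, φ (E c 0) * C * E 0 c * E i j
        = if c = i then φ (E i 0) * C * E 0 j else 0 := by
      intro c
      rw [mul_assoc, hEmul]
      by_cases h : c = i <;> simp [h]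
    have rhs : ∀ c, φ (E i j) * (φ (E c 0) * C * E 0 c)
        = if c = j then φ (E i 0) * C * E 0 j else 0 := by
      intro c
      rw [← mul_assoc, ← mul_assoc, ← hmul, hEmul]
      by_cases h : j = c
      · subst h; simp
      · rw [if_neg h, hφ0, zero_mul, zero_mul, if_neg (Ne.symm h)]
    simp only [lhs, rhs, Finset.sum_ite_eq', Finset.mem_univ, if_true]
  have hleft : ∀ j, φ (E 0 j) * G = C * E 0 j := by
    intro j
    rw [hG, Finset.mul_sum]
    have hterm : ∀ c, φ (E 0 j) * (φ (E c 0) * C * E 0 c)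
        = if c = j then φ (E 0 0) * C * E 0 j else 0 := by
      intro c
      rw [← mul_assoc, ← mul_assoc, ← hmul, hEmul]
      by_cases h : j = c
      · subst h; simp
      · rw [if_neg h, hφ0, zero_mul, zero_mul, if_neg (Ne.symm h)]
    simp only [hterm, Finset.sum_ite_eq', Finset.mem_univ, if_true, hidem]
  have hdet : G.det ≠ 0 := by
    intro hd
    obtain ⟨v, hv, hGv⟩ := (Matrix.exists_mulVec_eq_zero_iff).2 hd
    apply hv
    funext j
    have h1' : (φ (E 0 j) * G) *ᵥ v = 0 := by
      rw [← Matrix.mulVec_mulVec, hGv, Matrix.mulVec_zero]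
    rw [hleft] at h1'
    have h2' : ((C * E 0 j) *ᵥ v) a = C a 0 * v j := by
      rw [Matrix.mulVec, dotProduct]
      rw [Finset.sum_eq_single j (fun c _ hc => by
        rw [Matrix.mul_single_apply_of_ne _ _ _ _ c hc, zero_mul])
        (by simp)]
      rw [Matrix.mul_single_apply_same, mul_one]
    have h3' := congrFun h1' a
    rw [h2', hCcol] at h3'
    rcases mul_eq_zero.mp h3' with h | h
    · exact absurd h hab
    · exact h
  have hGu : IsUnit G := (Matrix.isUnit_iff_isUnit_det G).2 (isUnit_iff_ne_zero.2 hdet)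
  refine ⟨hGu.unit, fun A => ?_⟩
  have hAdecomp : A = ∑ i, ∑ j, (A i j) • E i j := by
    conv_lhs => rw [matrix_eq_sum_single A]
    refine Finset.sum_congr rfl fun i _ => Finset.sum_congr rfl fun j _ => ?_
    rw [Matrix.smul_single, smul_eq_mul, mul_one]
  have keyA : G * A = φ A * G := by
    conv_lhs => rw [hAdecomp]
    rw [Finset.mul_sum]
    calc (∑ i, G * ∑ j, A i j • E i j)
        = ∑ i, ∑ j, A i j • (φ (E i j) * G) := by
          refine Finset.sum_congr rfl fun i _ => ?_
          rw [Finset.mul_sum]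
          exact Finset.sum_congr rfl fun j _ => by rw [Matrix.mul_smul, key]
      _ = (∑ i, ∑ j, A i j • φ (E i j)) * G := by
          rw [Finset.sum_mul]
          exact Finset.sum_congr rfl fun i _ => by
            rw [Finset.sum_mul]
            exact Finset.sum_congr rfl fun j _ => (smul_mul_assoc _ _ _).symm
      _ = φ A * G := by
          congr 1
          conv_rhs => rw [hAdecomp]
          rw [hsum]
          refine Finset.sum_congr rfl fun i _ => ?_
          rw [hsum]
          exact Finset.sum_congr rfl fun j _ => (hsmul _ _).symm
  have hGg : (hGu.unit : Matrix (Fin n) (Fin n) k) = G := hGu.unit_spec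
  calc φ A = φ A * ((hGu.unit : Matrix (Fin n) (Fin n) k) * (↑hGu.unit⁻¹ : Matrix (Fin n) (Fin n) k)) := by
        rw [Units.mul_inv, mul_one]
    _ = (φ A * G) * (↑hGu.unit⁻¹ : Matrix (Fin n) (Fin n) k) := by rw [hGg, ← mul_assoc]
    _ = (↑hGu.unit : Matrix (Fin n) (Fin n) k) * A * (↑hGu.unit⁻¹ : Matrix (Fin n) (Fin n) k) := by
        rw [← keyA, hGg]

/-- The simultaneous-conjugation orbit of a generating `m`-tuple of `n×n`
matrices is Zariski closed: there is an ideal of the polynomial ring in the `m·n²`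
matrix-entry coordinates whose zero locus is exactly the orbit. -/
theorem stmt_2 (k : Type*) [Field k] [IsAlgClosed k] (m n : ℕ) [NeZero m] [NeZero n]
    (x : Fin m → Matrix (Fin n) (Fin n) k)
    (hx : Algebra.adjoin k (Set.range x) = ⊤) :
    ∃ I : Ideal (MvPolynomial (Fin m × Fin n × Fin n) k),
      ∀ y : Fin m → Matrix (Fin n) (Fin n) k,
        (∀ f ∈ I, MvPolynomial.eval (fun v : Fin m × Fin n × Fin n => y v.1 v.2.1 v.2.2) f = 0)
        ↔ ∃ g : GL (Fin n) k, ∀ i : Fin m,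
            y i = (g : Matrix (Fin n) (Fin n) k) * x i * (↑g⁻¹ : Matrix (Fin n) (Fin n) k) := by
  classical
  let εx : FreeAlgebra k (Fin m) →ₐ[k] Matrix (Fin n) (Fin n) k := FreeAlgebra.lift k x
  let Φ : FreeAlgebra k (Fin m) →ₐ[k]
      Matrix (Fin n) (Fin n) (MvPolynomial (Fin m × Fin n × Fin n) k) :=
    FreeAlgebra.lift k fun i => Matrix.of fun a b => MvPolynomial.X (i, a, b)
  refine ⟨Ideal.span {p | ∃ r, εx r = 0 ∧ ∃ a b, p = Φ r a b}, fun y => ?_⟩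
  let εy : FreeAlgebra k (Fin m) →ₐ[k] Matrix (Fin n) (Fin n) k := FreeAlgebra.lift k y
  let ev : MvPolynomial (Fin m × Fin n × Fin n) k →ₐ[k] k :=
    MvPolynomial.aeval fun v => y v.1 v.2.1 v.2.2
  have hev : ∀ p, MvPolynomial.eval (fun v : Fin m × Fin n × Fin n => y v.1 v.2.1 v.2.2) p
      = ev p := by
    intro p
    rw [← MvPolynomial.coe_aeval_eq_eval]
    rfl
  have hcomm : (AlgHom.mapMatrix ev).comp Φ = εy := by
    apply FreeAlgebra.hom_ext
    funext i
    show (AlgHom.mapMatrix ev) (Φ (FreeAlgebra.ι k i)) = εy (FreeAlgebra.ι k i)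
    rw [show Φ (FreeAlgebra.ι k i) = _ from FreeAlgebra.lift_ι_apply _ _,
        show εy (FreeAlgebra.ι k i) = y i from FreeAlgebra.lift_ι_apply _ _]
    ext a b
    simp [AlgHom.mapMatrix_apply, Matrix.map_apply, ev]
  have hentry : ∀ r a b, ev (Φ r a b) = εy r a b := by
    intro r a b
    rw [← hcomm]
    rfl
  constructor
  · intro h
    have hker : ∀ r, εx r = 0 → εy r = 0 := by
      intro r hr
      ext a b
      have hp : Φ r a b ∈ Ideal.span {p | ∃ r, εx r = 0 ∧ ∃ a b, p = Φ r a b} :=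
        Ideal.subset_span ⟨r, hr, a, b, rfl⟩
      have h0 := h _ hp
      rw [hev, hentry] at h0
      simpa using h0
    have hsurj : Function.Surjective εx := by
      intro A
      have hle : Algebra.adjoin k (Set.range x) ≤ εx.range :=
        Algebra.adjoin_le (by
          rintro _ ⟨i, rfl⟩
          exact ⟨FreeAlgebra.ι k i, FreeAlgebra.lift_ι_apply _ _⟩)
      have : A ∈ εx.range := hle (hx ▸ Algebra.mem_top)
      exact this
    set φ : Matrix (Fin n) (Fin n) k → Matrix (Fin n) (Fin n) k :=
      fun A => εy (Classical.choose (hsurj A)) with hφ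
    have hφx : ∀ r, φ (εx r) = εy r := by
      intro r
      have hc : εx (Classical.choose (hsurj (εx r))) = εx r :=
        Classical.choose_spec (hsurj (εx r))
      have h0 : εx (Classical.choose (hsurj (εx r)) - r) = 0 := by
        rw [_root_.map_sub, hc, sub_self]
      have h1 := hker _ h0
      rw [_root_.map_sub, sub_eq_zero] at h1
      exact h1
    have h1 : φ 1 = 1 := by
      have h' := hφx 1
      rw [_root_.map_one, _root_.map_one] at h'
      exact h'
    have hmulφ : ∀ A B, φ (A * B) = φ A * φ B := by
      intro A B
      obtain ⟨r, rfl⟩ := hsurj A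
      obtain ⟨s, rfl⟩ := hsurj B
      rw [← _root_.map_mul, hφx, _root_.map_mul, hφx, hφx]
    have haddφ : ∀ A B, φ (A + B) = φ A + φ B := by
      intro A B
      obtain ⟨r, rfl⟩ := hsurj A
      obtain ⟨s, rfl⟩ := hsurj B
      rw [← _root_.map_add, hφx, _root_.map_add, hφx, hφx]
    have hsmulφ : ∀ (c : k) A, φ (c • A) = c • φ A := by
      intro c A
      obtain ⟨r, rfl⟩ := hsurj A
      rw [← _root_.map_smul, hφx, _root_.map_smul, hφx]
    obtain ⟨g, hg⟩ := conj_of_hom φ h1 hmulφ haddφ hsmulφ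
    refine ⟨g, fun i => ?_⟩
    have hyi : y i = εy (FreeAlgebra.ι k i) := (FreeAlgebra.lift_ι_apply _ _).symm
    have hxi : εx (FreeAlgebra.ι k i) = x i := FreeAlgebra.lift_ι_apply _ _
    rw [hyi, ← hφx, hg, hxi]
  · rintro ⟨g, hg⟩ f hf
    have hconj : ∀ r, εy r = (↑g : Matrix (Fin n) (Fin n) k) * εx r
        * (↑g⁻¹ : Matrix (Fin n) (Fin n) k) := by
      intro r
      induction r using FreeAlgebra.induction with
      | grade0 c =>
        rw [AlgHom.commutes, AlgHom.commutes, ← Algebra.commutes c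
          (↑g : Matrix (Fin n) (Fin n) k), Units.mul_inv_cancel_right]
      | grade1 i =>
        rw [show εy (FreeAlgebra.ι k i) = y i from FreeAlgebra.lift_ι_apply _ _,
            show εx (FreeAlgebra.ι k i) = x i from FreeAlgebra.lift_ι_apply _ _]
        exact hg i
      | mul a b iha ihb =>
        rw [_root_.map_mul, _root_.map_mul, iha, ihb]
        simp only [mul_assoc, Units.inv_mul_cancel_left]
      | add a b iha ihb =>
        rw [_root_.map_add, _root_.map_add, iha, ihb, mul_add, add_mul]
    revert hf
    refine fun hf => ?_
    have hle : Ideal.span {p | ∃ r, εx r = 0 ∧ ∃ a b, p = Φ r a b}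
        ≤ RingHom.ker (MvPolynomial.eval fun v : Fin m × Fin n × Fin n => y v.1 v.2.1 v.2.2) := by
      rw [Ideal.span_le]
      rintro _ ⟨r, hr, a, b, rfl⟩
      have : εy r = 0 := by rw [hconj r, hr, mul_zero, zero_mul]
      have h2 : εy r a b = 0 := by rw [this]; rfl
      simp only [SetLike.mem_coe, RingHom.mem_ker]
      rw [hev, hentry, h2]
    exact hle hf
end

section
/- The ring R is a prime ring: for all a, b ∈ R, if a·r·b = 0 for every r ∈ R, then a = 0 or b = 0. -/
open Matrix Polynomial

variable (k : Type*) [Field k]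

/-- The `k`-subalgebra `R` of `S = M₂(k[t])` consisting of all matrices whose
lower-left entry lies in `t·k[t]`. -/
def lowerIdealSubalgebra : Subalgebra k (Matrix (Fin 2) (Fin 2) (Polynomial k)) where
  carrier := {M | M 1 0 ∈ Ideal.span {(X : Polynomial k)}}
  mul_mem' := by
    intro A B hA hB
    simp only [Set.mem_setOf_eq] at *
    rw [Matrix.mul_apply, Fin.sum_univ_two]
    exact Ideal.add_mem _ (Ideal.mul_mem_right _ _ hA) (Ideal.mul_mem_left _ _ hB)
  add_mem' := by
    intro A B hA hB
    simp only [Set.mem_setOf_eq] at *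
    exact Ideal.add_mem _ hA hB
  one_mem' := by
    simp only [Set.mem_setOf_eq, Matrix.one_apply_ne (by decide : (1 : Fin 2) ≠ 0)]
    exact Ideal.zero_mem _
  zero_mem' := by
    simp only [Set.mem_setOf_eq, Matrix.zero_apply]
    exact Ideal.zero_mem _
  algebraMap_mem' := by
    intro c
    simp only [Set.mem_setOf_eq, Matrix.algebraMap_matrix_apply,
      if_neg (by decide : ¬ (1 : Fin 2) = 0)]
    exact Ideal.zero_mem _

/-- `R` is a prime ring: if `a·r·b = 0` for all `r ∈ R`, then `a = 0` or
`b = 0`. -/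
theorem stmt_10 (a b : lowerIdealSubalgebra k)
    (h : ∀ r : lowerIdealSubalgebra k, a * r * b = 0) :
    a = 0 ∨ b = 0 := by
  by_contra hc
  push_neg at hc
  obtain ⟨ha, hb⟩ := hc
  have key : ∀ s : Matrix (Fin 2) (Fin 2) (Polynomial k),
      (a : Matrix (Fin 2) (Fin 2) (Polynomial k)) * s * (b : _) = 0 := by
    intro s
    have hmem : (X : Polynomial k) • s ∈ lowerIdealSubalgebra k := by
      show ((X : Polynomial k) • s) 1 0 ∈ Ideal.span {(X : Polynomial k)}
      rw [Matrix.smul_apply, smul_eq_mul, Ideal.mem_span_singleton]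
      exact Dvd.intro _ rfl
    have h0 := h ⟨_, hmem⟩
    have h1 : (a : Matrix (Fin 2) (Fin 2) (Polynomial k)) * ((X : Polynomial k) • s) * b = 0 := by
      have := congrArg Subtype.val h0
      simpa only [MulMemClass.coe_mul, ZeroMemClass.coe_zero] using this
    have h2 : (X : Polynomial k) • ((a : Matrix (Fin 2) (Fin 2) (Polynomial k)) * s * b) = 0 := by
      rw [Matrix.mul_smul, Matrix.smul_mul] at h1
      exact h1
    refine Matrix.ext fun p q => ?_
    have h3 := congrFun (congrFun h2 p) q
    rw [Matrix.smul_apply, smul_eq_mul, Matrix.zero_apply] at h3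
    rcases mul_eq_zero.mp h3 with h' | h'
    · exact absurd h' X_ne_zero
    · simpa using h'
  have ha' : (a : Matrix (Fin 2) (Fin 2) (Polynomial k)) ≠ 0 := fun h' => ha (Subtype.ext h')
  have hb' : (b : Matrix (Fin 2) (Fin 2) (Polynomial k)) ≠ 0 := fun h' => hb (Subtype.ext h')
  obtain ⟨p, i, hpi⟩ : ∃ p i, (a : Matrix (Fin 2) (Fin 2) (Polynomial k)) p i ≠ 0 := by
    by_contra hn; push_neg at hn
    exact ha' (Matrix.ext fun p i => by simpa using hn p i)
  obtain ⟨j, q, hjq⟩ : ∃ j q, (b : Matrix (Fin 2) (Fin 2) (Polynomial k)) j q ≠ 0 := by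
    by_contra hn; push_neg at hn
    exact hb' (Matrix.ext fun j q => by simpa using hn j q)
  have h3 := key (Matrix.single i j 1)
  have h4 := congrFun (congrFun h3 p) q
  rw [mul_assoc, Matrix.mul_apply, Matrix.zero_apply,
    Finset.sum_eq_single i] at h4
  · rw [Matrix.single_mul_apply_same, one_mul] at h4
    rcases mul_eq_zero.mp h4 with h' | h'
    · exact hpi h'
    · exact hjq h'
  · intro y _ hy
    rw [Matrix.single_mul_apply_of_ne (h := hy), mul_zero]
  · intro hi
    exact absurd (Finset.mem_univ i) hi
end

section
/- Assume m ≥ 2. Then every central element of the trace ring T_{m,n} is a scalar matrix: if z ∈ T_{m,n} satisfies z·w = w·z for all w ∈ T_{m,n}, then z = c·I for some polynomial c ∈ P. Consequently the center of T_{m,n} may be identified with a subring of the ring of PGL_n-invariant polynomial functions on M_n(k)^m. -/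
open Matrix MvPolynomial

noncomputable section

variable (k : Type*) [Field k] (m n : ℕ)

/-- The commutative polynomial ring `P = k[x_{ij}^{(h)}]` in the `m·n²` entries of `m`
generic `n×n` matrices. -/
abbrev GenPolyRing := MvPolynomial (Fin m × Fin n × Fin n) k

/-- The `h`-th generic `n×n` matrix, whose `(i,j)`-entry is the variable `x_{ij}^{(h)}`. -/
def genericMatrix (h : Fin m) : Matrix (Fin n) (Fin n) (GenPolyRing k m n) :=
  Matrix.of fun i j => MvPolynomial.X (h, i, j)

/-- The generic matrix algebra `G_{m,n}`: the `k`-subalgebra of `M_n(P)` generated by the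
generic matrices `X₁, …, X_m`. -/
def genericMatrixAlgebra : Subalgebra k (Matrix (Fin n) (Fin n) (GenPolyRing k m n)) :=
  Algebra.adjoin k (Set.range (genericMatrix k m n))

/-- The trace ring `T_{m,n}`: the `k`-subalgebra of `M_n(P)` generated by `G_{m,n}`
together with all scalar matrices `c·I` where `c` is a coefficient of the characteristic
polynomial of an element of `G_{m,n}`. -/
def traceRing : Subalgebra k (Matrix (Fin n) (Fin n) (GenPolyRing k m n)) :=
  Algebra.adjoin k (Set.range (genericMatrix k m n) ∪
    {w | ∃ p ∈ genericMatrixAlgebra k m n, ∃ s : ℕ,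
      w = (Matrix.charpoly p).coeff s • (1 : Matrix (Fin n) (Fin n) (GenPolyRing k m n))})

/-- Auxiliary: the cyclic shift matrix. -/
def cycMatrix [NeZero n] : Matrix (Fin n) (Fin n) k :=
  Matrix.of fun i j => if j = i + 1 then 1 else 0

open Fin.NatCast in
lemma cycMatrix_pow [NeZero n] (b : ℕ) (i j : Fin n) :
    ((cycMatrix k n) ^ b) i j = if j = i + (b : Fin n) then 1 else 0 := by
  induction b generalizing i j with
  | zero => simp [Matrix.one_apply, eq_comm]
  | succ b ih =>
    rw [pow_succ, Matrix.mul_apply]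
    simp only [ih]
    simp only [cycMatrix, Matrix.of_apply, ite_mul, one_mul, zero_mul]
    rw [Finset.sum_ite_eq' Finset.univ (i + (b : Fin n))]
    simp [add_assoc]

lemma det_words_ne_zero [NeZero n] (e : Fin n → k) (he : Function.Injective e) :
    (Matrix.of fun (p q : Fin n × Fin n) =>
      ((Matrix.diagonal e ^ (q.1 : ℕ) * cycMatrix k n ^ (q.2 : ℕ)) p.1 p.2)).det ≠ 0 := by
  set N : Matrix (Fin n × Fin n) (Fin n × Fin n) k := Matrix.of fun (p q : Fin n × Fin n) =>
      ((Matrix.diagonal e ^ (q.1 : ℕ) * cycMatrix k n ^ (q.2 : ℕ)) p.1 p.2) with hN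
  set τ : Equiv.Perm (Fin n × Fin n) :=
    Equiv.prodShear (Equiv.refl (Fin n)) (fun i => Equiv.addLeft i) with hτ
  have h1 : N.submatrix τ id = Matrix.blockDiagonal (fun _ : Fin n => Matrix.vandermonde e) := by
    ext ⟨i, b'⟩ ⟨a, b⟩
    simp only [hN, hτ, Matrix.submatrix_apply, Equiv.prodShear_apply, Equiv.coe_refl, id_eq,
      Matrix.of_apply, Matrix.diagonal_pow, Matrix.diagonal_mul, cycMatrix_pow,
      Fin.cast_val_eq_self, Matrix.blockDiagonal_apply, Matrix.vandermonde, Pi.pow_apply,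
      Equiv.coe_addLeft]
    simp only [add_right_inj]
    split <;> simp
  have hbd : (Matrix.blockDiagonal fun _ : Fin n => Matrix.vandermonde e).det ≠ 0 := by
    rw [Matrix.det_blockDiagonal]
    exact Finset.prod_ne_zero_iff.mpr fun _ _ => Matrix.det_vandermonde_ne_zero_iff.mpr he
  have h2 := Matrix.det_permute τ N
  intro h0
  rw [h0, mul_zero] at h2
  rw [← h1] at hbd
  exact hbd h2

/-- if `m ≥ 2`, every central element of the trace ring `T_{m,n}` is a
scalar matrix `c·I` with `c ∈ P`; thus the center of `T_{m,n}` is identified with a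
subring of the `PGL_n`-invariant polynomial functions on `M_n(k)^m`. -/
theorem stmt_12 [IsAlgClosed k] [NeZero n] (hm : 2 ≤ m) :
    ∀ z ∈ traceRing k m n, (∀ w ∈ traceRing k m n, z * w = w * z) →
      ∃ c : GenPolyRing k m n,
        z = c • (1 : Matrix (Fin n) (Fin n) (GenPolyRing k m n)) := by
  intro z _hz hcomm
  set h0 : Fin m := ⟨0, by omega⟩ with hh0
  set h1 : Fin m := ⟨1, by omega⟩ with hh1
  have hne : h1 ≠ h0 := by
    intro hcon
    exact absurd (congrArg Fin.val hcon) (by norm_num [hh0, hh1])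
  set X1 := genericMatrix k m n h0 with hX1def
  set X2 := genericMatrix k m n h1 with hX2def
  -- membership of words in the trace ring
  have hX : ∀ h : Fin m, genericMatrix k m n h ∈ traceRing k m n := fun h =>
    Algebra.subset_adjoin (Or.inl ⟨h, rfl⟩)
  have hW : ∀ q : Fin n × Fin n, X1 ^ (q.1 : ℕ) * X2 ^ (q.2 : ℕ) ∈ traceRing k m n := fun q =>
    mul_mem (pow_mem (hX h0) _) (pow_mem (hX h1) _)
  -- an injective tuple of scalars
  set e : Fin n → k := fun i => Infinite.natEmbedding k i.val with hedef
  have he : Function.Injective e := fun a b hab =>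
    Fin.val_injective ((Infinite.natEmbedding k).injective hab)
  -- the specialization sending X1 to a diagonal matrix and X2 to the cyclic shift
  set f : Fin m × Fin n × Fin n → k := fun v =>
    if v.1 = h0 then Matrix.diagonal e v.2.1 v.2.2
    else if v.1 = h1 then cycMatrix k n v.2.1 v.2.2 else 0 with hfdef
  set φ : GenPolyRing k m n →ₐ[k] k := MvPolynomial.aeval f with hφdef
  have hφX1 : X1.map φ = Matrix.diagonal e := by
    ext i j
    simp [hX1def, genericMatrix, hφdef, hfdef]
  have hφX2 : X2.map φ = cycMatrix k n := by
    ext i j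
    simp [hX2def, genericMatrix, hφdef, hfdef, hne]
  have hprod : ∀ a b : ℕ, (X1 ^ a * X2 ^ b).map φ
      = Matrix.diagonal e ^ a * cycMatrix k n ^ b := by
    intro a b
    have h1 : (AlgHom.mapMatrix φ) (X1 ^ a * X2 ^ b)
        = ((AlgHom.mapMatrix φ) X1) ^ a * ((AlgHom.mapMatrix φ) X2) ^ b := by
      rw [_root_.map_mul, _root_.map_pow, _root_.map_pow]
    simpa [AlgHom.mapMatrix_apply, hφX1, hφX2] using h1
  -- the big matrix of entries of the words
  set M : Matrix (Fin n × Fin n) (Fin n × Fin n) (GenPolyRing k m n) :=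
    Matrix.of fun p q => (X1 ^ (q.1 : ℕ) * X2 ^ (q.2 : ℕ)) p.1 p.2 with hM
  have hmapN : M.map φ = Matrix.of fun (p q : Fin n × Fin n) =>
      ((Matrix.diagonal e ^ (q.1 : ℕ) * cycMatrix k n ^ (q.2 : ℕ)) p.1 p.2) := by
    ext ⟨i, j⟩ ⟨a, b⟩
    simp only [Matrix.map_apply, hM, Matrix.of_apply]
    exact Matrix.ext_iff.mpr (hprod (a : ℕ) (b : ℕ)) i j
  have hφdet : φ M.det = (M.map ⇑φ).det := by
    rw [AlgHom.map_det, AlgHom.mapMatrix_apply]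
  have hdet0 : M.det ≠ 0 := by
    intro h
    apply det_words_ne_zero k n e he
    rw [← hmapN, ← hφdet, h, map_zero]
  -- z commutes with every matrix unit
  have hcommE : ∀ a b : Fin n,
      z * Matrix.single a b (1 : GenPolyRing k m n)
        = Matrix.single a b 1 * z := by
    intro i0 j0
    set v : Fin n × Fin n → GenPolyRing k m n := Pi.single (i0, j0) 1 with hvdef
    set c := Matrix.cramer M v with hcdef
    have hc : M *ᵥ c = M.det • v := Matrix.mulVec_cramer M v
    have hS : ∑ q : Fin n × Fin n, c q • (X1 ^ (q.1 : ℕ) * X2 ^ (q.2 : ℕ))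
        = M.det • Matrix.single i0 j0 (1 : GenPolyRing k m n) := by
      refine Matrix.ext fun i j => ?_
      have hrow := congrFun hc (i, j)
      simp only [Matrix.mulVec, dotProduct, hM, Matrix.of_apply] at hrow
      simp only [Matrix.sum_apply, Matrix.smul_apply, smul_eq_mul]
      rw [Finset.sum_congr rfl (fun q _ => mul_comm (c q) _), hrow]
      simp only [Pi.smul_apply, hvdef, smul_eq_mul]
      by_cases hp : ((i, j) : Fin n × Fin n) = (i0, j0)
      · obtain ⟨hi, hj⟩ := Prod.mk.inj hp
        subst hi; subst hj
        rw [Pi.single_eq_same, Matrix.single_apply_same]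
      · rw [Pi.single_eq_of_ne hp,
          show Matrix.single i0 j0 (1 : GenPolyRing k m n) i j = 0 from
            Matrix.single_apply_of_ne _ _ _ _ _
              (fun hcon => hp (Prod.ext hcon.1.symm hcon.2.symm))]
    have hzS : z * (M.det • Matrix.single i0 j0 (1 : GenPolyRing k m n))
        = (M.det • Matrix.single i0 j0 (1 : GenPolyRing k m n)) * z := by
      rw [← hS, Finset.mul_sum, Finset.sum_mul]
      refine Finset.sum_congr rfl fun q _ => ?_
      rw [mul_smul_comm, smul_mul_assoc, hcomm _ (hW q)]
    rw [mul_smul_comm, smul_mul_assoc] at hzS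
    refine Matrix.ext fun i j => ?_
    have h2 := Matrix.ext_iff.mpr hzS i j
    simp only [Matrix.smul_apply, smul_eq_mul] at h2
    exact mul_left_cancel₀ hdet0 h2
  -- conclude z is scalar
  refine ⟨z 0 0, ?_⟩
  refine Matrix.ext fun i j => ?_
  by_cases hij : i = j
  · subst hij
    have h2 := Matrix.ext_iff.mpr (hcommE i 0) i 0
    rw [Matrix.mul_single_apply_same, Matrix.single_mul_apply_same]
      at h2
    simp only [mul_one, one_mul] at h2
    simp [Matrix.one_apply, h2]
  · have h2 := Matrix.ext_iff.mpr (hcommE j 0) i 0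
    rw [Matrix.mul_single_apply_same,
      Matrix.single_mul_apply_of_ne (h := hij)] at h2
    simp only [mul_one] at h2
    simp [Matrix.one_apply, hij, h2]

end
end

section
/- Every surjective k-algebra homomorphism φ : T_{m,n} → M_n(k) is an evaluation map: setting a ∈ M_n(k)^m to be the tuple (φ(X₁),…,φ(X_m)), one has φ(p) = p(a) for every p ∈ T_{m,n}, where p(a) denotes the evaluation of p at the tuple a. -/
open Matrix MvPolynomial

noncomputable section
set_option synthInstance.maxHeartbeats 1000000
set_option maxHeartbeats 1000000

variable (k : Type*) [Field k] (m n : ℕ)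

/-- Evaluation at a tuple `x ∈ M_n(k)^m`: the `k`-algebra homomorphism
`M_n(P) → M_n(k)` substituting the entries of `x` for the variables `x_{ij}^{(h)}`. -/
def evalAt (x : Fin m → Matrix (Fin n) (Fin n) k) :
    Matrix (Fin n) (Fin n) (GenPolyRing k m n) →ₐ[k] Matrix (Fin n) (Fin n) k :=
  (MvPolynomial.aeval fun v : Fin m × Fin n × Fin n => x v.1 v.2.1 v.2.2).mapMatrix

-- ######################## auxiliary development ########################

variable {k m n}

lemma GsubT : genericMatrixAlgebra k m n ≤ traceRing k m n :=
  Algebra.adjoin_mono Set.subset_union_left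

lemma scalar_mem_T (q : Matrix (Fin n) (Fin n) (GenPolyRing k m n))
    (hq : q ∈ genericMatrixAlgebra k m n) (s : ℕ) :
    (Matrix.charpoly q).coeff s • (1 : Matrix (Fin n) (Fin n) (GenPolyRing k m n))
      ∈ traceRing k m n :=
  Algebra.subset_adjoin (Or.inr ⟨q, hq, s, rfl⟩)

/-- the scalar evaluation homomorphism `P → k` attached to a tuple. -/
def epsAt (x : Fin m → Matrix (Fin n) (Fin n) k) : GenPolyRing k m n →ₐ[k] k :=
  MvPolynomial.aeval fun v : Fin m × Fin n × Fin n => x v.1 v.2.1 v.2.2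

lemma evalAt_apply (x : Fin m → Matrix (Fin n) (Fin n) k)
    (M : Matrix (Fin n) (Fin n) (GenPolyRing k m n)) :
    evalAt k m n x M = M.map (epsAt x) := rfl

lemma evalAt_generic (x : Fin m → Matrix (Fin n) (Fin n) k) (h : Fin m) :
    evalAt k m n x (genericMatrix k m n h) = x h := by
  ext i j
  simp [evalAt_apply, epsAt, genericMatrix]

lemma evalAt_smul_one (x : Fin m → Matrix (Fin n) (Fin n) k) (c : GenPolyRing k m n) :
    evalAt k m n x (c • 1) = epsAt x c • 1 := by
  ext i j
  by_cases h : i = j <;>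
    simp [evalAt_apply, Matrix.map_apply, Matrix.one_apply, h]

/-- the tuple of images of the generic matrices. -/
def aTuple (φ : traceRing k m n →ₐ[k] Matrix (Fin n) (Fin n) k) :
    Fin m → Matrix (Fin n) (Fin n) k :=
  fun i => φ ⟨genericMatrix k m n i,
    Algebra.subset_adjoin (Or.inl (Set.mem_range_self i))⟩

/-- (A) `φ` agrees with evaluation on the generic matrix algebra. -/
lemma phi_eq_ev_onG (φ : traceRing k m n →ₐ[k] Matrix (Fin n) (Fin n) k)
    (x : Matrix (Fin n) (Fin n) (GenPolyRing k m n)) (hx : x ∈ genericMatrixAlgebra k m n)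
    (hx' : x ∈ traceRing k m n) :
    φ ⟨x, hx'⟩ = evalAt k m n (aTuple φ) x := by
  induction hx using Algebra.adjoin_induction with
  | mem y hy =>
    obtain ⟨i, rfl⟩ := hy
    rw [evalAt_generic]
    exact congrArg φ (Subtype.ext rfl)
  | algebraMap r =>
    have h1 : (⟨algebraMap k _ r, hx'⟩ : traceRing k m n) = algebraMap k (traceRing k m n) r :=
      Subtype.ext rfl
    rw [h1, AlgHom.commutes, AlgHom.commutes]
  | add y z hy hz ihy ihz =>
    have h1 : (⟨y + z, hx'⟩ : traceRing k m n) = ⟨y, GsubT hy⟩ + ⟨z, GsubT hz⟩ :=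
      Subtype.ext rfl
    rw [h1, map_add, map_add, ihy, ihz]
  | mul y z hy hz ihy ihz =>
    have h1 : (⟨y * z, hx'⟩ : traceRing k m n) = ⟨y, GsubT hy⟩ * ⟨z, GsubT hz⟩ :=
      Subtype.ext rfl
    rw [h1, _root_.map_mul, _root_.map_mul, ihy, ihz]

/-- (B) central scalars map to scalars. -/
lemma phi_scalar (φ : traceRing k m n →ₐ[k] Matrix (Fin n) (Fin n) k)
    (hφ : Function.Surjective φ) (c : GenPolyRing k m n)
    (hmem : c • (1 : Matrix (Fin n) (Fin n) (GenPolyRing k m n)) ∈ traceRing k m n) :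
    ∃ α : k, φ ⟨c • 1, hmem⟩ = α • 1 := by
  have hcomm : ∀ Y : Matrix (Fin n) (Fin n) k, φ ⟨c • 1, hmem⟩ * Y = Y * φ ⟨c • 1, hmem⟩ := by
    intro Y
    obtain ⟨x, rfl⟩ := hφ Y
    rw [← _root_.map_mul, ← _root_.map_mul]
    congr 1
    apply Subtype.ext
    show (c • 1) * (x : Matrix (Fin n) (Fin n) (GenPolyRing k m n)) = x * (c • 1)
    rw [smul_mul_assoc, one_mul, mul_smul_comm, mul_one]
  obtain ⟨r, hr⟩ := Matrix.mem_range_scalar_of_commute_single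
    (M := φ ⟨c • 1, hmem⟩) (fun i j _ => (hcomm _).symm)
  exact ⟨r, by rw [← hr, Matrix.scalar_apply, ← Matrix.smul_one_eq_diagonal]⟩

/-- (C) evaluation is surjective from the generic matrix algebra. -/
lemma ev_surj (φ : traceRing k m n →ₐ[k] Matrix (Fin n) (Fin n) k)
    (hφ : Function.Surjective φ) (Y : Matrix (Fin n) (Fin n) k) :
    ∃ g ∈ genericMatrixAlgebra k m n, evalAt k m n (aTuple φ) g = Y := by
  have key : ∀ (x : Matrix (Fin n) (Fin n) (GenPolyRing k m n)) (hx : x ∈ traceRing k m n),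
      ∃ g ∈ genericMatrixAlgebra k m n, evalAt k m n (aTuple φ) g = φ ⟨x, hx⟩ := by
    intro x hx
    induction hx using Algebra.adjoin_induction with
    | mem y hy =>
      rcases hy with ⟨i, rfl⟩ | ⟨p, hp, s, rfl⟩
      · refine ⟨genericMatrix k m n i, Algebra.subset_adjoin ⟨i, rfl⟩, ?_⟩
        exact (phi_eq_ev_onG φ (genericMatrix k m n i) (Algebra.subset_adjoin ⟨i, rfl⟩) _).symm
      · obtain ⟨α, hα⟩ := phi_scalar φ hφ _ (scalar_mem_T p hp s)
        refine ⟨algebraMap k _ α, Subalgebra.algebraMap_mem _ α, ?_⟩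
        rw [hα, AlgHom.commutes, Algebra.algebraMap_eq_smul_one]
    | algebraMap r =>
      refine ⟨algebraMap k _ r, Subalgebra.algebraMap_mem _ r, ?_⟩
      have h1 : (⟨algebraMap k _ r, by exact Subalgebra.algebraMap_mem _ r⟩ :
          traceRing k m n) = algebraMap k (traceRing k m n) r := Subtype.ext rfl
      rw [h1, AlgHom.commutes, AlgHom.commutes]
    | add y z hy hz ihy ihz =>
      obtain ⟨g1, hg1, e1⟩ := ihy; obtain ⟨g2, hg2, e2⟩ := ihz
      refine ⟨g1 + g2, add_mem hg1 hg2, ?_⟩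
      have h1 : (⟨y + z, add_mem hy hz⟩ : traceRing k m n)
          = ⟨y, hy⟩ + ⟨z, hz⟩ := Subtype.ext rfl
      rw [map_add, e1, e2, h1, map_add]
    | mul y z hy hz ihy ihz =>
      obtain ⟨g1, hg1, e1⟩ := ihy; obtain ⟨g2, hg2, e2⟩ := ihz
      refine ⟨g1 * g2, mul_mem hg1 hg2, ?_⟩
      have h1 : (⟨y * z, mul_mem hy hz⟩ : traceRing k m n)
          = ⟨y, hy⟩ * ⟨z, hz⟩ := Subtype.ext rfl
      rw [_root_.map_mul, e1, e2, h1, _root_.map_mul]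
  obtain ⟨x, hx⟩ := hφ Y
  obtain ⟨g, hg, e⟩ := key x.1 x.2
  refine ⟨g, hg, ?_⟩
  rw [e, ← hx]


/-- charpoly along an affine line, as specialization of a polynomial. -/
lemma line_charpoly {A : Type*} [CommRing A] (q g : Matrix (Fin n) (Fin n) A) (x : A) :
    Matrix.charpoly (q + x • g)
      = (Matrix.charpoly (q.map Polynomial.C + (Polynomial.X : Polynomial A) • g.map Polynomial.C)).map
          (Polynomial.evalRingHom x) := by
  rw [← Matrix.charpoly_map]
  congr 1
  ext i j
  simp [Matrix.map_apply, Matrix.add_apply, Matrix.smul_apply]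
  ring

lemma line_charpoly_coeff {A : Type*} [CommRing A] (q g : Matrix (Fin n) (Fin n) A) (x : A)
    (s : ℕ) :
    (Matrix.charpoly (q + x • g)).coeff s
      = ((Matrix.charpoly (q.map Polynomial.C
          + (Polynomial.X : Polynomial A) • g.map Polynomial.C)).coeff s).eval x := by
  rw [line_charpoly, Polynomial.coeff_map, Polynomial.coe_evalRingHom]

/-- interpolation kit: weights extracting the constant coefficient. -/
lemma interp_weights {N : ℕ} (t : Fin (N + 1) → k) (ht : Function.Injective t) :
    ∃ w : Fin (N + 1) → k, ∀ (A : Type u_1) (_ : CommRing A) (_ : Algebra k A)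
      (u : Polynomial A), u.natDegree ≤ N →
      ∑ i : Fin (N + 1), w i • u.eval (algebraMap k A (t i)) = u.coeff 0 := by
  set V := Matrix.vandermonde t with hV
  have hdet : IsUnit Vᵀ.det := by
    rw [Matrix.det_transpose, Matrix.det_vandermonde]
    refine (Finset.prod_ne_zero_iff.2 fun i _ => Finset.prod_ne_zero_iff.2 fun j hj => ?_).isUnit
    exact sub_ne_zero.2 fun h => (Finset.mem_Ioi.mp hj).ne' (ht h)
  refine ⟨Vᵀ⁻¹ *ᵥ Pi.single 0 1, ?_⟩
  have hK : ∀ r : Fin (N + 1), ∑ i, (Vᵀ⁻¹ *ᵥ Pi.single 0 1) i * t i ^ (r : ℕ)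
      = if r = 0 then 1 else 0 := by
    intro r
    have := congrFun (by rw [Matrix.mulVec_mulVec, Matrix.mul_nonsing_inv _ hdet,
      Matrix.one_mulVec] : Vᵀ *ᵥ (Vᵀ⁻¹ *ᵥ Pi.single 0 1) = Pi.single 0 1) r
    rw [Pi.single_apply] at this
    rw [← this]
    simp only [Matrix.mulVec, dotProduct, Matrix.transpose_apply, hV,
      Matrix.vandermonde]
    exact Finset.sum_congr rfl fun i _ => mul_comm _ _
  intro A _ _ u hu
  have he : ∀ i : Fin (N + 1), u.eval (algebraMap k A (t i))
      = ∑ r : Fin (N + 1), (t i ^ (r : ℕ)) • u.coeff (r : ℕ) := by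
    intro i
    rw [Polynomial.eval_eq_sum_range' (lt_of_le_of_lt hu (Nat.lt_succ_self N)),
      ← Fin.sum_univ_eq_sum_range]
    refine Finset.sum_congr rfl fun r _ => ?_
    rw [← map_pow, Algebra.smul_def, mul_comm]
  calc ∑ i : Fin (N + 1), (Vᵀ⁻¹ *ᵥ Pi.single 0 1) i • u.eval (algebraMap k A (t i))
      = ∑ i : Fin (N + 1), ∑ r : Fin (N + 1),
          ((Vᵀ⁻¹ *ᵥ Pi.single 0 1) i * t i ^ (r : ℕ)) • u.coeff (r : ℕ) := by
        refine Finset.sum_congr rfl fun i _ => ?_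
        rw [he i, Finset.smul_sum]
        exact Finset.sum_congr rfl fun r _ => smul_smul _ _ _
    _ = ∑ r : Fin (N + 1), (∑ i, (Vᵀ⁻¹ *ᵥ Pi.single 0 1) i * t i ^ (r : ℕ)) • u.coeff (r : ℕ) := by
        rw [Finset.sum_comm]
        exact Finset.sum_congr rfl fun r _ => (Finset.sum_smul).symm
    _ = u.coeff 0 := by
        simp only [hK]
        rw [Finset.sum_eq_single (0 : Fin (N + 1))]
        · simp
        · intro b _ hb; simp [hb]
        · simp


/-- row-sum Krylov matrix: columns are `M^r * (1,…,1)ᵀ`. -/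
def Wm {A : Type*} [CommRing A] (M : Matrix (Fin n) (Fin n) A) : Matrix (Fin n) (Fin n) A :=
  Matrix.of fun i r => ∑ j, (M ^ (r : ℕ)) i j

lemma Wm_map {A B : Type*} [CommRing A] [CommRing B] (f : A →+* B)
    (M : Matrix (Fin n) (Fin n) A) : (Wm M).map f = Wm (M.map f) := by
  ext i r
  simp only [Wm, Matrix.map_apply, Matrix.of_apply, map_sum]
  have : (M.map f) ^ (r : ℕ) = (M ^ (r : ℕ)).map f := (map_pow f.mapMatrix M (r : ℕ)).symm
  rw [this]
  simp [Matrix.map_apply]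

/-- (D) at a cyclic ("good") point, `φ` sends the characteristic coefficients of `q`
to the characteristic coefficients of its image. -/
lemma phi_charcoeff_of_cyclic [NeZero n] (φ : traceRing k m n →ₐ[k] Matrix (Fin n) (Fin n) k)
    (hφ : Function.Surjective φ) (q : Matrix (Fin n) (Fin n) (GenPolyRing k m n))
    (hq : q ∈ genericMatrixAlgebra k m n)
    (hW : (Wm (evalAt k m n (aTuple φ) q)).det ≠ 0) (s : ℕ) :
    φ ⟨(Matrix.charpoly q).coeff s • 1, scalar_mem_T q hq s⟩
      = (Matrix.charpoly (evalAt k m n (aTuple φ) q)).coeff s • 1 := by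
  set M := evalAt k m n (aTuple φ) q with hM
  -- the scalars λ
  have hsc : ∀ s : ℕ, ∃ α : k,
      φ ⟨(Matrix.charpoly q).coeff s • 1, scalar_mem_T q hq s⟩ = α • 1 :=
    fun s => phi_scalar φ hφ _ _
  choose lam hlam using hsc
  -- natDegree facts
  have hdeg : (Matrix.charpoly q).natDegree = n := by
    rw [Matrix.charpoly_natDegree_eq_dim, Fintype.card_fin]
  have hdegM : (Matrix.charpoly M).natDegree = n := by
    rw [Matrix.charpoly_natDegree_eq_dim, Fintype.card_fin]
  have i0 : Fin n := ⟨0, Nat.pos_of_ne_zero (NeZero.ne n)⟩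
  -- λ n = 1
  have hlamn : lam n = 1 := by
    have h1 : (Matrix.charpoly q).coeff n = 1 := by
      have := (Matrix.charpoly_monic q).coeff_natDegree
      rwa [hdeg] at this
    have h2 : (⟨(Matrix.charpoly q).coeff n • 1, scalar_mem_T q hq n⟩ : traceRing k m n)
        = 1 := by
      apply Subtype.ext
      show (Matrix.charpoly q).coeff n • 1 = (1 : Matrix (Fin n) (Fin n) (GenPolyRing k m n))
      rw [h1, one_smul]
    have := hlam n
    rw [h2, _root_.map_one] at this
    have := congrFun (congrFun this i0) i0
    simpa using this.symm
  -- Cayley-Hamilton pushed through φ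
  have keyT : (∑ i ∈ Finset.range (n + 1),
      (⟨(Matrix.charpoly q).coeff i • 1, scalar_mem_T q hq i⟩ : traceRing k m n)
        * (⟨q, GsubT hq⟩ : traceRing k m n) ^ i) = 0 := by
    apply Subtype.ext
    push_cast
    show (∑ i ∈ Finset.range (n + 1),
      ((Matrix.charpoly q).coeff i • 1) * q ^ i : Matrix (Fin n) (Fin n) (GenPolyRing k m n)) = 0
    have := Matrix.aeval_self_charpoly q
    rw [Polynomial.aeval_eq_sum_range' (n := n + 1) (by rw [hdeg]; exact Nat.lt_succ_self n)] at this
    rw [← this]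
    exact Finset.sum_congr rfl fun i _ => by rw [smul_mul_assoc, one_mul]
  have keyk : (∑ i ∈ Finset.range (n + 1), lam i • M ^ i) = 0 := by
    have := congrArg φ keyT
    rw [map_zero, map_sum] at this
    rw [← this]
    refine Finset.sum_congr rfl fun i _ => ?_
    rw [_root_.map_mul, map_pow, hlam i, phi_eq_ev_onG φ q hq, ← hM, smul_mul_assoc, one_mul]
  have keyk2 : (∑ i ∈ Finset.range (n + 1), (Matrix.charpoly M).coeff i • M ^ i) = 0 := by
    have := Matrix.aeval_self_charpoly M
    rw [Polynomial.aeval_eq_sum_range' (n := n + 1) (by rw [hdegM]; exact Nat.lt_succ_self n)] at this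
    rw [← this]
  -- difference of the two annihilating relations
  set dl : ℕ → k := fun i => lam i - (Matrix.charpoly M).coeff i with hdl
  have hcoeffMn : (Matrix.charpoly M).coeff n = 1 := by
    have := (Matrix.charpoly_monic M).coeff_natDegree
    rwa [hdegM] at this
  have hdln : dl n = 0 := by simp [hdl, hlamn, hcoeffMn]
  have keydl : (∑ i ∈ Finset.range n, dl i • M ^ i) = 0 := by
    have h3 : (∑ i ∈ Finset.range (n + 1), dl i • M ^ i) = 0 := by
      have hsplit : (∑ i ∈ Finset.range (n + 1), dl i • M ^ i)
          = (∑ i ∈ Finset.range (n + 1), lam i • M ^ i)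
            - (∑ i ∈ Finset.range (n + 1), (Matrix.charpoly M).coeff i • M ^ i) := by
        rw [← Finset.sum_sub_distrib]
        exact Finset.sum_congr rfl fun i _ => by rw [hdl, sub_smul]
      rw [hsplit, keyk, keyk2, sub_zero]
    rw [Finset.sum_range_succ, hdln, zero_smul, add_zero] at h3
    exact h3
  -- kill the difference using the cyclic vector
  have hvec : Wm M *ᵥ (fun r : Fin n => dl (r : ℕ)) = 0 := by
    funext i
    show (∑ r : Fin n, Wm M i r * dl (r : ℕ)) = 0
    have h5 : ∀ j, (∑ r ∈ Finset.range n, dl r • M ^ r) i j = 0 := fun j => by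
      rw [keydl]; rfl
    calc ∑ r : Fin n, Wm M i r * dl (r : ℕ)
        = ∑ r : Fin n, ∑ j, dl (r : ℕ) • (M ^ (r : ℕ)) i j := by
          refine Finset.sum_congr rfl fun r _ => ?_
          show (∑ j, (M ^ (r : ℕ)) i j) * dl (r : ℕ) = _
          rw [Finset.sum_mul]
          exact Finset.sum_congr rfl fun j _ => by rw [smul_eq_mul, mul_comm]
      _ = ∑ j, ∑ r : Fin n, dl (r : ℕ) • (M ^ (r : ℕ)) i j := Finset.sum_comm
      _ = ∑ j, (∑ r ∈ Finset.range n, dl r • M ^ r) i j := by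
          refine Finset.sum_congr rfl fun j _ => ?_
          rw [Fin.sum_univ_eq_sum_range (fun r => dl r • (M ^ r) i j)]
          rw [Matrix.sum_apply]
          exact Finset.sum_congr rfl fun r _ => by rw [Matrix.smul_apply]
      _ = 0 := by simp [h5]
  have hdlv : (fun r : Fin n => dl (r : ℕ)) = 0 := by
    have hinv := Matrix.nonsing_inv_mul (Wm M) (isUnit_iff_ne_zero.mpr hW)
    calc (fun r : Fin n => dl (r : ℕ)) = 1 *ᵥ (fun r : Fin n => dl (r : ℕ)) :=
          (Matrix.one_mulVec _).symm
      _ = ((Wm M)⁻¹ * Wm M) *ᵥ (fun r : Fin n => dl (r : ℕ)) := by rw [hinv]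
      _ = (Wm M)⁻¹ *ᵥ (Wm M *ᵥ (fun r : Fin n => dl (r : ℕ))) :=
          (Matrix.mulVec_mulVec _ _ _).symm
      _ = 0 := by rw [hvec, Matrix.mulVec_zero]
  rcases lt_trichotomy s n with h | rfl | h
  · have hs : lam s = (Matrix.charpoly M).coeff s := by
      have := congrFun hdlv ⟨s, h⟩
      simpa [hdl, sub_eq_zero] using this
    rw [hlam s, hs]
  · rw [hlam s, hlamn, hcoeffMn]
  · have h1 : (Matrix.charpoly q).coeff s = 0 :=
      Polynomial.coeff_eq_zero_of_natDegree_lt (by rw [hdeg]; exact h)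
    have h2 : (Matrix.charpoly M).coeff s = 0 :=
      Polynomial.coeff_eq_zero_of_natDegree_lt (by rw [hdegM]; exact h)
    have h3 : (⟨(Matrix.charpoly q).coeff s • 1, scalar_mem_T q hq s⟩ : traceRing k m n) = 0 := by
      apply Subtype.ext
      show (Matrix.charpoly q).coeff s • 1 = (0 : Matrix (Fin n) (Fin n) (GenPolyRing k m n))
      rw [h1, zero_smul]
    rw [h3, map_zero, h2, zero_smul]


lemma eps_charcoeff (x : Fin m → Matrix (Fin n) (Fin n) k)
    (M : Matrix (Fin n) (Fin n) (GenPolyRing k m n)) (s : ℕ) :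
    (Matrix.charpoly (evalAt k m n x M)).coeff s = epsAt x ((Matrix.charpoly M).coeff s) := by
  rw [evalAt_apply]
  rw [show M.map (epsAt x) = M.map ((epsAt x : GenPolyRing k m n →+* k)) from rfl]
  rw [Matrix.charpoly_map, Polynomial.coeff_map]
  rfl

lemma det_Wm_diagonal (d : Fin n → k) (hd : Function.Injective d) :
    (Wm (Matrix.diagonal d)).det ≠ 0 := by
  have hWd : Wm (Matrix.diagonal d) = Matrix.vandermonde d := by
    ext i r
    simp only [Wm, Matrix.of_apply, Matrix.vandermonde, Matrix.diagonal_pow]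
    rw [Finset.sum_eq_single i (fun j _ hj => Matrix.diagonal_apply_ne _ (Ne.symm hj))
      (fun h => absurd (Finset.mem_univ i) h)]
    · rw [Matrix.diagonal_apply_eq]; rfl
  rw [hWd, Matrix.det_vandermonde]
  refine Finset.prod_ne_zero_iff.2 fun i _ => Finset.prod_ne_zero_iff.2 fun j hj => ?_
  exact sub_ne_zero.2 fun h => (Finset.mem_Ioi.mp hj).ne' (hd h)

/-- (F) the key lemma: `φ` agrees with evaluation on all characteristic coefficients. -/
lemma phi_charcoeff [IsAlgClosed k] [NeZero n]
    (φ : traceRing k m n →ₐ[k] Matrix (Fin n) (Fin n) k)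
    (hφ : Function.Surjective φ) (q : Matrix (Fin n) (Fin n) (GenPolyRing k m n))
    (hq : q ∈ genericMatrixAlgebra k m n) (s : ℕ) :
    φ ⟨(Matrix.charpoly q).coeff s • 1, scalar_mem_T q hq s⟩
      = evalAt k m n (aTuple φ) ((Matrix.charpoly q).coeff s • 1) := by
  set B := evalAt k m n (aTuple φ) q with hB
  -- a diagonal matrix with distinct entries
  set d : Fin n → k := fun i => Infinite.natEmbedding k i.val with hd
  have hdinj : Function.Injective d :=
    (Infinite.natEmbedding k).injective.comp Fin.val_injective
  set D := Matrix.diagonal d with hD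
  obtain ⟨g, hgG, hg⟩ := ev_surj φ hφ (D - B)
  -- the universal polynomial for the coefficient along the line
  set u : Polynomial (GenPolyRing k m n) :=
    (Matrix.charpoly (q.map Polynomial.C
      + (Polynomial.X : Polynomial (GenPolyRing k m n)) • g.map Polynomial.C)).coeff s with hu
  have hline : ∀ t : k, (Matrix.charpoly (q + t • g)).coeff s
      = u.eval (algebraMap k (GenPolyRing k m n) t) := by
    intro t
    rw [← algebraMap_smul (GenPolyRing k m n) t g, line_charpoly_coeff]
  have hc0 : (Matrix.charpoly q).coeff s = u.coeff 0 := by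
    have := hline 0
    rw [zero_smul, add_zero, map_zero, ← Polynomial.coeff_zero_eq_eval_zero] at this
    exact this
  -- the goodness detector polynomial
  set W0 := Wm (B.map Polynomial.C + (Polynomial.X : Polynomial k) • (D - B).map Polynomial.C)
    with hW0
  set hpoly : Polynomial k := W0.det with hhp
  have hevalW : ∀ t : k, hpoly.eval t = (Wm (B + t • (D - B))).det := by
    intro t
    have h1 : hpoly.eval t = (W0.map (Polynomial.evalRingHom t)).det := by
      rw [hhp, show Polynomial.eval t W0.det = (Polynomial.evalRingHom t) W0.det from rfl,
        RingHom.map_det, RingHom.mapMatrix_apply]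
    have harg : (B.map Polynomial.C
        + (Polynomial.X : Polynomial k) • (D - B).map Polynomial.C).map (Polynomial.evalRingHom t)
        = B + t • (D - B) := by
      ext i j
      simp [Matrix.map_apply, Matrix.add_apply, Matrix.smul_apply, mul_comm]
    rw [h1, hW0, Wm_map, harg]
  have hpoly1 : hpoly.eval 1 ≠ 0 := by
    rw [hevalW 1, one_smul, add_sub_cancel]
    exact det_Wm_diagonal d hdinj
  have hpoly_ne : hpoly ≠ 0 := fun h => hpoly1 (by rw [h, Polynomial.eval_zero])
  -- infinitely many good points
  have hgood : ({t : k | hpoly.eval t ≠ 0}).Infinite := by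
    have hfin : ({t : k | hpoly.eval t = 0}).Finite := Polynomial.finite_setOf_isRoot hpoly_ne
    have : {t : k | hpoly.eval t ≠ 0} = {t : k | hpoly.eval t = 0}ᶜ := by
      ext t; simp [Set.mem_compl_iff]
    rw [this]
    exact Set.Finite.infinite_compl hfin
  set N := u.natDegree with hN
  set emb := hgood.natEmbedding with hemb
  set t : Fin (N + 1) → k := fun i => (emb i.val).1 with ht
  have htinj : Function.Injective t := by
    intro i j hij
    exact Fin.val_injective (emb.injective (Subtype.ext hij))
  have htmem : ∀ i, hpoly.eval (t i) ≠ 0 := fun i => (emb i.val).2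
  obtain ⟨w, hw⟩ := interp_weights t htinj
  -- the points on the line
  have hqi : ∀ i : Fin (N + 1), q + t i • g ∈ genericMatrixAlgebra k m n := fun i =>
    add_mem hq (Subalgebra.smul_mem _ hgG _)
  have hMi : ∀ i : Fin (N + 1), evalAt k m n (aTuple φ) (q + t i • g) = B + t i • (D - B) := by
    intro i
    rw [map_add, _root_.map_smul, hg, hB]
  have hWi : ∀ i : Fin (N + 1), (Wm (evalAt k m n (aTuple φ) (q + t i • g))).det ≠ 0 := by
    intro i
    rw [hMi i, ← hevalW]
    exact htmem i
  -- the interpolation identity inside the trace ring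
  have hTid : (⟨(Matrix.charpoly q).coeff s • 1, scalar_mem_T q hq s⟩ : traceRing k m n)
      = ∑ i : Fin (N + 1), w i •
          (⟨(Matrix.charpoly (q + t i • g)).coeff s • 1,
            scalar_mem_T _ (hqi i) s⟩ : traceRing k m n) := by
    apply Subtype.ext
    push_cast
    rw [hc0, ← hw (GenPolyRing k m n) _ _ u le_rfl, Finset.sum_smul]
    refine Finset.sum_congr rfl fun i _ => ?_
    rw [hline (t i), smul_assoc]
  -- push through φ
  rw [hTid, map_sum]
  have hzi : ∀ i : Fin (N + 1),
      φ (w i • (⟨(Matrix.charpoly (q + t i • g)).coeff s • 1,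
          scalar_mem_T _ (hqi i) s⟩ : traceRing k m n))
        = w i • (epsAt (aTuple φ) (u.eval (algebraMap k _ (t i))) • 1) := by
    intro i
    rw [_root_.map_smul, phi_charcoeff_of_cyclic φ hφ _ (hqi i) (hWi i) s,
      eps_charcoeff, hline (t i)]
  rw [Finset.sum_congr rfl fun i _ => hzi i]
  have hsum : (∑ i : Fin (N + 1), w i • (epsAt (aTuple φ)
        (u.eval (algebraMap k (GenPolyRing k m n) (t i))) • (1 : Matrix (Fin n) (Fin n) k)))
      = (epsAt (aTuple φ) (∑ i : Fin (N + 1),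
          w i • u.eval (algebraMap k (GenPolyRing k m n) (t i)))) • 1 := by
    rw [map_sum, Finset.sum_smul]
    refine Finset.sum_congr rfl fun i _ => ?_
    rw [_root_.map_smul, smul_assoc]
  rw [hsum, hw _ _ _ u le_rfl, evalAt_smul_one, hc0]


variable (k m n)

/-- every surjective `k`-algebra homomorphism `φ : T_{m,n} → M_n(k)` is
the evaluation at the tuple `a = (φ(X₁), …, φ(X_m))`. -/
theorem stmt_13 [IsAlgClosed k] [NeZero m] [NeZero n]
    (φ : traceRing k m n →ₐ[k] Matrix (Fin n) (Fin n) k)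
    (hφ : Function.Surjective φ) :
    ∀ p : traceRing k m n,
      φ p = evalAt k m n
        (fun i => φ ⟨genericMatrix k m n i,
          Algebra.subset_adjoin (Or.inl (Set.mem_range_self i))⟩)
        (p : Matrix (Fin n) (Fin n) (GenPolyRing k m n)) := by
  intro p
  obtain ⟨x, hx⟩ := p
  show φ ⟨x, hx⟩ = evalAt k m n (aTuple φ) x
  induction hx using Algebra.adjoin_induction with
  | mem y hy =>
    rcases hy with ⟨i, rfl⟩ | ⟨p', hp', s, rfl⟩
    · rw [evalAt_generic]
      exact congrArg φ (Subtype.ext rfl)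
    · exact (congrArg φ (Subtype.ext rfl : (⟨_, _⟩ : traceRing k m n)
        = ⟨_, scalar_mem_T p' hp' s⟩)).trans (phi_charcoeff φ hφ p' hp' s)
  | algebraMap r =>
    have h1 : (⟨algebraMap k _ r, Subalgebra.algebraMap_mem _ r⟩ : traceRing k m n)
        = algebraMap k (traceRing k m n) r := Subtype.ext rfl
    rw [h1, AlgHom.commutes, AlgHom.commutes]
  | add y z hy hz ihy ihz =>
    have h1 : (⟨y + z, add_mem hy hz⟩ : traceRing k m n) = ⟨y, hy⟩ + ⟨z, hz⟩ :=
      Subtype.ext rfl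
    rw [h1, map_add, map_add, ihy, ihz]
  | mul y z hy hz ihy ihz =>
    have h1 : (⟨y * z, mul_mem hy hz⟩ : traceRing k m n) = ⟨y, hy⟩ * ⟨z, hz⟩ :=
      Subtype.ext rfl
    rw [h1, _root_.map_mul, _root_.map_mul, ihy, ihz]

end
end

section
/- Let A be a k-subalgebra of M_n(K) such that A is a simple ring, every central element of A is a scalar matrix (so that F = {c ∈ K : c·I ∈ A} is a field, the center of A), and the dimension of A as an F-vector space is n². Then: (a) the K-linear span of A is all of M_n(K); and (b) for every k-subalgebra R with A ⊆ R ⊆ M_n(K), every central element of R is a scalar matrix, i.e., of the form c·I with c ∈ K. -/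
open Matrix

set_option synthInstance.maxHeartbeats 1000000
set_option maxHeartbeats 1000000

private lemma key_indep {k K : Type*} [Field k] [Field K] [Algebra k K] {n : ℕ} [NeZero n]
    {A : Subalgebra k (Matrix (Fin n) (Fin n) K)}
    (hsimple : IsSimpleRing A)
    (hcentral : ∀ z ∈ A, (∀ w ∈ A, z * w = w * z) →
      ∃ c : K, z = c • (1 : Matrix (Fin n) (Fin n) K))
    {F : Subfield K}
    (hF : ∀ c : K, c ∈ F ↔ c • (1 : Matrix (Fin n) (Fin n) K) ∈ A)
    {ι : Type*} [DecidableEq ι] :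
    ∀ (s : Finset ι) (c : ι → K),
      (∀ g : ι → K, (∀ i ∈ s, g i ∈ F) → (∑ i ∈ s, g i * c i) = 0 → ∀ i ∈ s, g i = 0) →
      ∀ a : ι → Matrix (Fin n) (Fin n) K, (∀ i ∈ s, a i ∈ A) →
        (∑ i ∈ s, c i • a i) = 0 → ∀ i ∈ s, a i = 0 := by
  intro s
  induction s using Finset.strongInduction with
  | _ s IH =>
    intro c hc a ha hrel
    by_contra hcon
    push_neg at hcon
    obtain ⟨i₀, hi₀s, hi₀⟩ := hcon
    set S : Set (Matrix (Fin n) (Fin n) K) :=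
      {t | ∃ b : ι → Matrix (Fin n) (Fin n) K,
        (∀ i ∈ s, b i ∈ A) ∧ (∑ i ∈ s, c i • b i) = 0 ∧ b i₀ = t} with hS
    have hzero : (0 : Matrix (Fin n) (Fin n) K) ∈ S :=
      ⟨fun _ => 0, fun i _ => A.zero_mem, by simp, rfl⟩
    have hadd : ∀ {x y : Matrix (Fin n) (Fin n) K}, x ∈ S → y ∈ S → x + y ∈ S := by
      rintro x y ⟨b, hb, hbrel, rfl⟩ ⟨b', hb', hbrel', rfl⟩
      exact ⟨fun i => b i + b' i, fun i hi => A.add_mem (hb i hi) (hb' i hi), by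
        simp only [smul_add, Finset.sum_add_distrib, hbrel, hbrel', add_zero], rfl⟩
    have hneg : ∀ {x : Matrix (Fin n) (Fin n) K}, x ∈ S → -x ∈ S := by
      rintro x ⟨b, hb, hbrel, rfl⟩
      refine ⟨fun i => -(b i), fun i hi => A.neg_mem (hb i hi), ?_, rfl⟩
      simp only [smul_neg]
      rw [Finset.sum_neg_distrib, hbrel, neg_zero]
    have hsand : ∀ (x y : Matrix (Fin n) (Fin n) K), x ∈ A → y ∈ A →
        ∀ {t : Matrix (Fin n) (Fin n) K}, t ∈ S → x * t * y ∈ S := by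
      rintro x y hx hy t ⟨b, hb, hbrel, rfl⟩
      refine ⟨fun i => x * b i * y, fun i hi => A.mul_mem (A.mul_mem hx (hb i hi)) hy, ?_, rfl⟩
      have he : ∀ i, c i • (x * b i * y) = x * (c i • b i) * y := by
        intro i; rw [mul_smul_comm, smul_mul_assoc]
      calc (∑ i ∈ s, c i • (x * b i * y)) = x * (∑ i ∈ s, c i • b i) * y := by
            rw [Finset.mul_sum, Finset.sum_mul]; exact Finset.sum_congr rfl fun i _ => he i
        _ = 0 := by rw [hbrel, mul_zero, zero_mul]
    have haS : a i₀ ∈ S := ⟨a, ha, hrel, rfl⟩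
    let J : TwoSidedIdeal A := TwoSidedIdeal.mk' {t : A | (t : Matrix (Fin n) (Fin n) K) ∈ S}
      hzero (fun hx hy => hadd hx hy) (fun hx => hneg hx)
      (fun {x y} hy => by simpa using hsand (x : Matrix (Fin n) (Fin n) K) 1 x.2 A.one_mem hy)
      (fun {x y} hx => by simpa using hsand 1 (y : Matrix (Fin n) (Fin n) K) A.one_mem y.2 hx)
    have hmemJ : ∀ t : A, t ∈ J ↔ (t : Matrix (Fin n) (Fin n) K) ∈ S :=
      fun t => TwoSidedIdeal.mem_mk' _ _ _ _ _ _ t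
    have hJtop : J = ⊤ := by
      rcases hsimple.simple.eq_bot_or_eq_top J with h | h
      · exfalso
        have : (⟨a i₀, ha i₀ hi₀s⟩ : A) ∈ J := (hmemJ _).mpr haS
        rw [h, TwoSidedIdeal.mem_bot] at this
        exact hi₀ (congrArg Subtype.val this)
      · exact h
    have h1S : (1 : Matrix (Fin n) (Fin n) K) ∈ S :=
      (hmemJ 1).mp (hJtop ▸ TwoSidedIdeal.mem_top _)
    obtain ⟨b, hb, hbrel, hb1⟩ := h1S
    have hbcomm : ∀ i ∈ s, ∀ z ∈ A, z * b i = b i * z := by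
      intro i hi z hz
      rcases eq_or_ne i i₀ with rfl | hne
      · rw [hb1, mul_one, one_mul]
      · have hrel2 : (∑ j ∈ s.erase i₀, c j • (z * b j - b j * z)) = 0 := by
          have hfull : (∑ j ∈ s, c j • (z * b j - b j * z)) = 0 := by
            have he : ∀ j, c j • (z * b j - b j * z) = z * (c j • b j) - (c j • b j) * z := by
              intro j; rw [smul_sub, mul_smul_comm, smul_mul_assoc]
            calc (∑ j ∈ s, c j • (z * b j - b j * z))
                = z * (∑ j ∈ s, c j • b j) - (∑ j ∈ s, c j • b j) * z := by
                  rw [Finset.mul_sum, Finset.sum_mul, ← Finset.sum_sub_distrib]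
                  exact Finset.sum_congr rfl fun j _ => he j
              _ = 0 := by rw [hbrel, mul_zero, zero_mul, sub_zero]
          rw [Finset.sum_erase_eq_sub hi₀s, hfull, hb1, mul_one, one_mul, sub_self,
            smul_zero, sub_zero]
        have hc' : ∀ g : ι → K, (∀ j ∈ s.erase i₀, g j ∈ F) →
            (∑ j ∈ s.erase i₀, g j * c j) = 0 → ∀ j ∈ s.erase i₀, g j = 0 := by
          intro g hg hgrel
          set g' : ι → K := fun j => if j = i₀ then 0 else g j with hg'
          have h1 : ∀ j ∈ s, g' j ∈ F := by
            intro j hjs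
            by_cases h : j = i₀
            · simp [hg', h, F.zero_mem]
            · simpa [hg', h] using hg j (Finset.mem_erase.mpr ⟨h, hjs⟩)
          have h2 : (∑ j ∈ s, g' j * c j) = 0 := by
            rw [← Finset.sum_erase_add _ _ hi₀s]
            have e1 : g' i₀ = 0 := by simp [hg']
            have e2 : (∑ j ∈ s.erase i₀, g' j * c j) = ∑ j ∈ s.erase i₀, g j * c j :=
              Finset.sum_congr rfl fun j hj => by
                rw [hg']; simp only [if_neg (Finset.ne_of_mem_erase hj)]
            rw [e1, e2, hgrel, zero_mul, add_zero]
          have hmain := hc g' h1 h2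
          intro j hj
          have := hmain j (Finset.mem_of_mem_erase hj)
          rw [hg'] at this
          simp only [if_neg (Finset.ne_of_mem_erase hj)] at this
          exact this
        have hres := IH (s.erase i₀) (Finset.erase_ssubset hi₀s) c hc'
          (fun j => z * b j - b j * z)
          (fun j hj => A.sub_mem (A.mul_mem hz (hb j (Finset.mem_of_mem_erase hj)))
            (A.mul_mem (hb j (Finset.mem_of_mem_erase hj)) hz))
          hrel2 i (Finset.mem_erase.mpr ⟨hne, hi⟩)
        exact sub_eq_zero.mp hres
    have hscal : ∀ i ∈ s, ∃ c' : K, c' ∈ F ∧ b i = c' • (1 : Matrix (Fin n) (Fin n) K) := by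
      intro i hi
      obtain ⟨c', hc'⟩ := hcentral (b i) (hb i hi)
        (fun w hw => (hbcomm i hi w hw).symm)
      exact ⟨c', (hF c').mpr (hc' ▸ hb i hi), hc'⟩
    choose f hfF hfb using hscal
    classical
    set g : ι → K := fun i => if hi : i ∈ s then f i hi else 0 with hg
    have hgF : ∀ i ∈ s, g i ∈ F := by intro i hi; simp only [hg, dif_pos hi]; exact hfF i hi
    have hgb : ∀ i ∈ s, b i = g i • (1 : Matrix (Fin n) (Fin n) K) := by
      intro i hi; simp only [hg, dif_pos hi]; exact hfb i hi
    have hsum : (∑ i ∈ s, (c i * g i)) • (1 : Matrix (Fin n) (Fin n) K) = 0 := by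
      rw [Finset.sum_smul, ← hbrel]
      exact (Finset.sum_congr rfl fun i hi => by rw [hgb i hi, smul_smul]).symm
    have hsum0 : (∑ i ∈ s, g i * c i) = 0 := by
      rw [show (∑ i ∈ s, g i * c i) = ∑ i ∈ s, c i * g i from
        Finset.sum_congr rfl fun i _ => mul_comm _ _]
      rcases smul_eq_zero.mp hsum with h | h
      · exact h
      · exact absurd h one_ne_zero
    have hg0 := hc g (fun i hi => hgF i hi) hsum0
    have : (1 : Matrix (Fin n) (Fin n) K) = 0 := by
      have h' := hgb i₀ hi₀s
      rw [hg0 i₀ hi₀s, zero_smul] at h'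
      rw [← hb1, h']
    exact one_ne_zero this

private lemma smulF_mem {k K : Type*} [Field k] [Field K] [Algebra k K] {n : ℕ} [NeZero n]
    {A : Subalgebra k (Matrix (Fin n) (Fin n) K)} {F : Subfield K}
    (hF : ∀ c : K, c ∈ F ↔ c • (1 : Matrix (Fin n) (Fin n) K) ∈ A)
    {f : K} (hf : f ∈ F) {x : Matrix (Fin n) (Fin n) K} (hx : x ∈ A) : f • x ∈ A := by
  have : f • x = (f • (1 : Matrix (Fin n) (Fin n) K)) * x := by
    rw [smul_mul_assoc, one_mul]
  rw [this]
  exact A.mul_mem ((hF f).mp hf) hx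

private lemma upgrade_indep {k K : Type*} [Field k] [Field K] [Algebra k K] {n : ℕ} [NeZero n]
    {A : Subalgebra k (Matrix (Fin n) (Fin n) K)}
    (hsimple : IsSimpleRing A)
    (hcentral : ∀ z ∈ A, (∀ w ∈ A, z * w = w * z) →
      ∃ c : K, z = c • (1 : Matrix (Fin n) (Fin n) K))
    {F : Subfield K}
    (hF : ∀ c : K, c ∈ F ↔ c • (1 : Matrix (Fin n) (Fin n) K) ∈ A)
    {m : ℕ} {v : Fin m → Matrix (Fin n) (Fin n) K}
    (hvA : ∀ i, v i ∈ A) (hvind : LinearIndependent F v) :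
    LinearIndependent K v := by
  rw [Fintype.linearIndependent_iff]
  intro g hgrel
  set W : Submodule F K := Submodule.span F (Set.range g) with hW
  haveI : FiniteDimensional F W := FiniteDimensional.span_of_finite F (Set.finite_range g)
  set e := Module.finBasis F W with he
  have ind : LinearIndependent F (fun t => ((e t : W) : K)) :=
    e.linearIndependent.map' W.subtype (Submodule.ker_subtype W)
  have gW : ∀ i, g i ∈ W := fun i => Submodule.subset_span (Set.mem_range_self i)
  set h : Fin m → Fin (Module.finrank F W) → F := fun i t => e.repr ⟨g i, gW i⟩ t with hh
  have hdec : ∀ i, g i = ∑ t, ((h i t : K) * (e t : K)) := by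
    intro i
    have h2 := congrArg (Subtype.val : W → K) (e.sum_repr ⟨g i, gW i⟩)
    simp only [AddSubmonoidClass.coe_finset_sum] at h2
    refine h2.symm.trans (Finset.sum_congr rfl fun t _ => ?_)
    rw [SetLike.val_smul, Subfield.smul_def, smul_eq_mul]
  have hrel2 : (∑ t, (e t : K) • (∑ i, (h i t : K) • v i)) = 0 := by
    calc (∑ t, (e t : K) • ∑ i, (h i t : K) • v i)
        = ∑ t, ∑ i, ((h i t : K) * (e t : K)) • v i := by
          refine Finset.sum_congr rfl fun t _ => ?_
          rw [Finset.smul_sum]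
          exact Finset.sum_congr rfl fun i _ => by rw [smul_smul, mul_comm]
      _ = ∑ i, ∑ t, ((h i t : K) * (e t : K)) • v i := Finset.sum_comm
      _ = ∑ i, g i • v i := by
          refine Finset.sum_congr rfl fun i _ => ?_
          rw [← Finset.sum_smul, ← hdec i]
      _ = 0 := hgrel
  have hc : ∀ g' : Fin (Module.finrank F W) → K, (∀ t ∈ Finset.univ, g' t ∈ F) →
      (∑ t ∈ Finset.univ, g' t * (e t : K)) = 0 → ∀ t ∈ Finset.univ, g' t = 0 := by
    intro g' hg' hrel' t _
    have h3 := Fintype.linearIndependent_iff.mp ind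
      (fun t => (⟨g' t, hg' t (Finset.mem_univ t)⟩ : F)) ?_ t
    · exact congrArg Subtype.val h3
    · rw [← hrel']
      exact Finset.sum_congr rfl fun t _ => by
        rw [Subfield.smul_def, smul_eq_mul]
  have hkey := key_indep hsimple hcentral hF Finset.univ (fun t => (e t : K)) hc
    (fun t => ∑ i, (h i t : K) • v i)
    (fun t _ => Subalgebra.sum_mem A fun i _ =>
      smulF_mem hF (SetLike.coe_mem (h i t)) (hvA i))
    hrel2
  have hzero : ∀ t i, h i t = 0 := by
    intro t i
    refine Fintype.linearIndependent_iff.mp hvind (fun i => h i t) ?_ i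
    exact hkey t (Finset.mem_univ t)
  intro i
  rw [hdec i]
  simp [hzero]

/-- let `A` be a `k`-subalgebra of `M_n(K)` which is a simple ring, whose
central elements are all scalar matrices (so that `F = {c ∈ K : c·I ∈ A}` is a field, the
center of `A`), and which has dimension `n²` as an `F`-vector space. Then (a) the
`K`-linear span of `A` is all of `M_n(K)`, and (b) for every `k`-subalgebra `R` with
`A ⊆ R ⊆ M_n(K)`, every central element of `R` is a scalar matrix `c·I` with `c ∈ K`. -/
theorem stmt_14 (k K : Type*) [Field k] [Field K] [Algebra k K] (n : ℕ) [NeZero n]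
    (A : Subalgebra k (Matrix (Fin n) (Fin n) K))
    (hsimple : IsSimpleRing A)
    (hcentral : ∀ z ∈ A, (∀ w ∈ A, z * w = w * z) →
      ∃ c : K, z = c • (1 : Matrix (Fin n) (Fin n) K))
    (F : Subfield K)
    (hF : ∀ c : K, c ∈ F ↔ c • (1 : Matrix (Fin n) (Fin n) K) ∈ A)
    (hdim : Module.finrank F
      (Submodule.span F (A : Set (Matrix (Fin n) (Fin n) K))) = n ^ 2) :
    Submodule.span K (A : Set (Matrix (Fin n) (Fin n) K)) = ⊤ ∧
    ∀ R : Subalgebra k (Matrix (Fin n) (Fin n) K), A ≤ R →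
      ∀ z ∈ R, (∀ w ∈ R, z * w = w * z) →
        ∃ c : K, z = c • (1 : Matrix (Fin n) (Fin n) K) := by
  classical
  have hspan : Submodule.span K (A : Set (Matrix (Fin n) (Fin n) K)) = ⊤ := by
    set SA : Submodule F (Matrix (Fin n) (Fin n) K) :=
      { carrier := A
        add_mem' := fun hx hy => A.add_mem hx hy
        zero_mem' := A.zero_mem
        smul_mem' := fun f x hx => smulF_mem hF (SetLike.coe_mem f) hx } with hSA
    set N : Submodule F (Matrix (Fin n) (Fin n) K) :=
      Submodule.span F (A : Set (Matrix (Fin n) (Fin n) K)) with hN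
    have hNA : ∀ x ∈ N, x ∈ A := by
      intro x hx
      have hle : N ≤ SA := Submodule.span_le.mpr (fun y hy => hy)
      exact hle hx
    haveI : FiniteDimensional F N := FiniteDimensional.of_finrank_pos
      (by rw [hdim]; exact pow_pos (Nat.pos_of_ne_zero (NeZero.ne n)) 2)
    set b0 : Module.Basis (Fin (n ^ 2)) F N := (Module.finBasis F N).reindex (finCongr hdim) with hb0
    set v : Fin (n ^ 2) → Matrix (Fin n) (Fin n) K := fun i => ((b0 i : N) : _) with hv
    have hvA : ∀ i, v i ∈ A := fun i => hNA _ (SetLike.coe_mem (b0 i))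
    have hvind : LinearIndependent F v :=
      b0.linearIndependent.map' N.subtype (Submodule.ker_subtype N)
    have hKind : LinearIndependent K v := upgrade_indep hsimple hcentral hF hvA hvind
    have hrange : Set.range v ⊆ (A : Set (Matrix (Fin n) (Fin n) K)) := by
      rintro x ⟨i, rfl⟩; exact hvA i
    have hle2 : Submodule.span K (Set.range v) ≤
        Submodule.span K (A : Set (Matrix (Fin n) (Fin n) K)) := Submodule.span_mono hrange
    have hfr : Module.finrank K (Submodule.span K (Set.range v)) = n ^ 2 := by
      rw [finrank_span_eq_card hKind, Fintype.card_fin]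
    have hfrM : Module.finrank K (Matrix (Fin n) (Fin n) K) = n ^ 2 := by
      rw [Module.finrank_matrix, Fintype.card_fin, Module.finrank_self, mul_one, sq]
    apply Submodule.eq_top_of_finrank_eq
    rw [hfrM]
    refine le_antisymm (by rw [← hfrM]; exact Submodule.finrank_le _) ?_
    rw [← hfr]
    exact Submodule.finrank_mono hle2
  refine ⟨hspan, ?_⟩
  intro R hAR z hz hcomm
  have hzA : ∀ w : Matrix (Fin n) (Fin n) K, z * w = w * z := by
    set C : Submodule K (Matrix (Fin n) (Fin n) K) :=
      { carrier := {m | z * m = m * z}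
        add_mem' := fun {x y} hx hy => by
          simp only [Set.mem_setOf_eq] at *
          rw [mul_add, add_mul, hx, hy]
        zero_mem' := by simp
        smul_mem' := fun c x hx => by
          simp only [Set.mem_setOf_eq] at *
          rw [mul_smul_comm, smul_mul_assoc, hx] } with hC
    have hsub : Submodule.span K (A : Set (Matrix (Fin n) (Fin n) K)) ≤ C :=
      Submodule.span_le.mpr (fun a ha => hcomm a (hAR ha))
    intro w
    exact hsub (hspan ▸ Submodule.mem_top) 
  obtain ⟨c, hc⟩ := mem_range_scalar_of_commute_single
    (M := z) (fun i j _ => (hzA _).symm)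
  refine ⟨c, ?_⟩
  rw [← hc]
  ext i j
  simp [Matrix.scalar, Matrix.one_apply, Matrix.diagonal_apply]
end
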